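/- arXiv:1701.00265 — 4 statements merged into one kernel-verified Lean document; each statement's English description precedes it below -/
import Mathlib

section
/- For every real x > 0 one has ∫_0^∞ (Σ_{n∈ℤ} (−1)^n e^{−πn²t}) e^{−πx²t} dt = 1/(x·sinh(πx)), where the integrand's series converges absolutely for every t > 0 and the integral converges absolutely. -/
open Real MeasureTheory

open Complex intervalIntegral

lemma neg_one_zpow_sq (n : ℤ) : ((-1:ℂ)^n) * ((-1:ℂ)^n) = 1 := by
  rw [← zpow_add₀ (by norm_num : (-1:ℂ) ≠ 0), ← two_mul, zpow_mul]
  norm_num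

lemma neg_one_zpow_inv (n : ℤ) : ((-1:ℂ)^n)⁻¹ = (-1:ℂ)^n :=
  inv_eq_of_mul_eq_one_right (neg_one_zpow_sq n)

lemma exp_pi_I_int (n : ℤ) : Complex.exp (↑π * I * n) = (-1:ℂ)^n := by
  rw [show ((π:ℂ) * I * n) = n * (↑π * I) by ring, Complex.exp_int_mul, Complex.exp_pi_mul_I]

lemma exp_neg_pi_I_int (n : ℤ) : Complex.exp (-(↑π * I * n)) = (-1:ℂ)^n := by
  rw [Complex.exp_neg, exp_pi_I_int, neg_one_zpow_inv]

lemma coeff_eq (x : ℝ) (hx : 0 < x) (n : ℤ) :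
    fourierCoeffOn (by norm_num : (-(1/2):ℝ) < -(1/2) + 1)
      (fun θ : ℝ => Complex.cosh (2*π*x*θ)) n
      = (-1:ℂ)^n * (Real.sinh (π*x) * x / (π*(x^2+(n:ℝ)^2))) := by
  have hπ : (π:ℝ) ≠ 0 := Real.pi_ne_zero
  set c₁ : ℂ := 2*↑π*(x:ℂ) - 2*↑π*I*n with hc₁def
  set c₂ : ℂ := -(2*↑π*(x:ℂ)) - 2*↑π*I*n with hc₂def
  have hc₁ : c₁ ≠ 0 := by
    intro h
    rw [Complex.ext_iff] at h
    simp [hc₁def] at h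
    exact hx.ne' h.1
  have hc₂ : c₂ ≠ 0 := by
    intro h
    rw [Complex.ext_iff] at h
    simp [hc₂def] at h
    exact hx.ne' h.1
  rw [fourierCoeffOn_eq_integral]
  have hb : (-(1/2:ℝ) + 1 - -(1/2)) = 1 := by norm_num
  simp_rw [fourier_coe_apply, hb, smul_eq_mul]
  have hint : ∀ θ : ℝ, cexp (2*↑π*I*↑(-n)*↑θ/↑(1:ℝ)) * Complex.cosh (2*↑π*↑x*↑θ)
      = (cexp (c₁*θ) + cexp (c₂*θ))/2 := by
    intro θ
    rw [hc₁def, hc₂def]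
    rw [show Complex.cosh (2*↑π*↑x*↑θ) = (cexp (2*↑π*↑x*↑θ) + cexp (-(2*↑π*↑x*↑θ)))/2 from rfl, ← mul_div_assoc, mul_add, ← Complex.exp_add, ← Complex.exp_add]
    congr 2 <;> push_cast <;> ring
  rw [integral_congr (g := fun θ : ℝ => (cexp (c₁*θ) + cexp (c₂*θ))/2)
    (fun θ _ => hint θ)]
  have hii : ∀ c : ℂ, IntervalIntegrable (fun θ : ℝ => cexp (c * θ)) volume (-(1/2)) (-(1/2)+1) :=
    fun c => (Complex.continuous_exp.comp (continuous_const.mul Complex.continuous_ofReal)).intervalIntegrable _ _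
  rw [intervalIntegral.integral_div, integral_add (hii c₁) (hii c₂),
    integral_exp_mul_complex hc₁, integral_exp_mul_complex hc₂]
  have e1 : cexp (c₁ * ↑(-(1/2:ℝ)+1)) = cexp (π*x) * (-1)^n := by
    rw [show c₁ * ↑(-(1/2:ℝ)+1) = ↑π*(x:ℂ) + -(↑π * I * n) by push_cast; ring,
      Complex.exp_add, exp_neg_pi_I_int]
  have e2 : cexp (c₁ * ↑(-(1/2:ℝ))) = cexp (-(π*x)) * (-1)^n := by
    rw [show c₁ * ↑(-(1/2:ℝ)) = -(↑π*(x:ℂ)) + (↑π * I * n) by push_cast; ring,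
      Complex.exp_add, exp_pi_I_int]
  have e3 : cexp (c₂ * ↑(-(1/2:ℝ)+1)) = cexp (-(π*x)) * (-1)^n := by
    rw [show c₂ * ↑(-(1/2:ℝ)+1) = -(↑π*(x:ℂ)) + -(↑π * I * n) by push_cast; ring,
      Complex.exp_add, exp_neg_pi_I_int]
  have e4 : cexp (c₂ * ↑(-(1/2:ℝ))) = cexp (π*x) * (-1)^n := by
    rw [show c₂ * ↑(-(1/2:ℝ)) = ↑π*(x:ℂ) + (↑π * I * n) by push_cast; ring,
      Complex.exp_add, exp_pi_I_int]
  rw [e1, e2, e3, e4]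
  rw [show ((Real.sinh (π*x) : ℂ)) = Complex.sinh (↑π * ↑x) by
    rw [Complex.ofReal_sinh]; push_cast; ring_nf]
  rw [show Complex.sinh (↑π*↑x) = (cexp (↑π*↑x) - cexp (-(↑π*↑x)))/2 from rfl]
  have hx2 : ((x:ℂ)^2 + (n:ℂ)^2) ≠ 0 := by
    have : ((x:ℂ)^2 + (n:ℂ)^2) = ((x^2 + (n:ℝ)^2 : ℝ) : ℂ) := by push_cast; ring
    rw [this]
    exact_mod_cast (by positivity : (0:ℝ) < x^2 + (n:ℝ)^2).ne'
  have hπc : (π:ℂ) ≠ 0 := by exact_mod_cast hπ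
  have hfac : c₁ * c₂ = -((2*↑π)^2) * ((x:ℂ)^2 + (n:ℂ)^2) := by
    rw [hc₁def, hc₂def]; ring_nf; rw [Complex.I_sq]; ring
  field_simp
  rw [one_smul, hfac, hc₁def, hc₂def]
  push_cast
  field_simp
  ring

-- summability of 1/(x²+n²) over ℤ
lemma sum_inv_sq (x : ℝ) (hx : 0 < x) : Summable (fun n : ℤ => 1 / (x^2 + (n:ℝ)^2)) := by
  have hnat : Summable (fun n : ℕ => 1 / (x^2 + (n:ℝ)^2)) := by
    rw [← summable_nat_add_iff 1]
    apply Summable.of_nonneg_of_le (fun n => by positivity)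
      (fun n => ?_) ((summable_nat_add_iff 1).mpr (Real.summable_one_div_nat_pow.mpr one_lt_two))
    rw [one_div, one_div]
    apply inv_anti₀ (by positivity)
    push_cast
    nlinarith [sq_nonneg x]
  apply Summable.of_nat_of_neg <;> simpa using hnat

lemma keySum (x : ℝ) (hx : 0 < x) :
    HasSum (fun n : ℤ => (-1:ℝ)^n * (1 / (π * (x^2 + (n:ℝ)^2))))
      (1 / (x * Real.sinh (π * x))) := by
  haveI : Fact ((0:ℝ) < 1) := ⟨one_pos⟩
  have hπ : (0:ℝ) < π := Real.pi_pos
  have hs : 0 < Real.sinh (π * x) := Real.sinh_pos_iff.mpr (by positivity)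
  set f : ℝ → ℂ := fun θ => Complex.cosh (2*π*x*θ) with hf
  have hper : f (-(1/2)) = f (-(1/2) + 1) := by
    show Complex.cosh _ = Complex.cosh _
    rw [show (2*(π:ℂ)*x*((-(1/2):ℝ):ℂ)) = -(π*x) by push_cast; ring,
      show (2*(π:ℂ)*x*((-(1/2)+1:ℝ):ℂ)) = π*x by push_cast; ring, Complex.cosh_neg]
  have hcont : Continuous (AddCircle.liftIco 1 (-(1/2)) f) := by
    apply AddCircle.liftIco_continuous hper
    exact (Complex.continuous_cosh.comp (by continuity)).continuousOn
  set F : C(AddCircle (1:ℝ), ℂ) := ⟨_, hcont⟩ with hF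
  have hcoeff : ∀ n : ℤ, fourierCoeff (F : AddCircle (1:ℝ) → ℂ) n
      = (-1:ℂ)^n * (Real.sinh (π*x) * x / (π*(x^2+(n:ℝ)^2))) := by
    intro n
    show fourierCoeff (AddCircle.liftIco 1 (-(1/2)) f) n = _
    rw [fourierCoeff_liftIco_eq f n]
    exact coeff_eq x hx n
  have hnorm : ∀ n : ℤ, ‖fourierCoeff (F : AddCircle (1:ℝ) → ℂ) n‖
      = Real.sinh (π*x) * x / π * (1 / (x^2 + (n:ℝ)^2)) := by
    intro n
    rw [hcoeff n]
    have hpos : (0:ℝ) < x^2 + (n:ℝ)^2 := by positivity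
    rw [show ((-1:ℂ)^n * ((Real.sinh (π*x) : ℂ) * ↑x / (↑π*((x:ℂ)^2+((n:ℝ):ℂ)^2))))
        = (((-1:ℝ)^n * (Real.sinh (π*x) * x / (π*(x^2+(n:ℝ)^2))) : ℝ) : ℂ) by push_cast; ring]
    rw [Complex.norm_real, Real.norm_eq_abs, abs_mul,
      show |(-1:ℝ)^n| = 1 by
        rcases Int.even_or_odd n with h|h
        · rw [h.neg_one_zpow]; norm_num
        · rw [Odd.neg_one_zpow h]; norm_num,
      one_mul, abs_of_pos (by positivity)]
    field_simp
  have hsummable : Summable (fun n : ℤ => fourierCoeff (F : AddCircle (1:ℝ) → ℂ) n) := by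
    apply Summable.of_norm
    simp_rw [hnorm]
    exact (sum_inv_sq x hx).mul_left _
  have hpoint := has_pointwise_sum_fourier_series_of_summable hsummable (((0:ℝ) : AddCircle (1:ℝ)))
  have hF0 : F (((0:ℝ) : AddCircle (1:ℝ))) = 1 := by
    show AddCircle.liftIco 1 (-(1/2)) f ((0:ℝ)) = 1
    rw [AddCircle.liftIco_coe_apply (by norm_num : (0:ℝ) ∈ Set.Ico (-(1/2)) (-(1/2)+1))]
    show Complex.cosh _ = 1
    norm_num
  have hfour : ∀ n : ℤ, (fourier n (((0:ℝ) : AddCircle (1:ℝ))) : ℂ) = 1 := by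
    intro n
    rw [fourier_coe_apply]
    norm_num
  simp_rw [hF0, smul_eq_mul, hfour, mul_one, hcoeff] at hpoint
  have hd : ((Real.sinh (π*x) : ℂ) * (x:ℂ)) ≠ 0 := by
    push_cast
    exact_mod_cast mul_ne_zero (by exact_mod_cast hs.ne') (by exact_mod_cast hx.ne')
  have h2 := hpoint.div_const ((Real.sinh (π*x) : ℂ) * (x:ℂ))
  have heq : (fun n : ℤ => (-1:ℂ)^n * ((Real.sinh (π*x) :ℂ) * ↑x / (↑π*((x:ℂ)^2+((n:ℝ):ℂ)^2)))
      / ((Real.sinh (π*x) : ℂ) * (x:ℂ)))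
      = fun n : ℤ => (((-1:ℝ)^n * (1 / (π * (x^2 + (n:ℝ)^2))) : ℝ) : ℂ) := by
    funext n
    rw [div_eq_iff hd]
    push_cast
    ring
  rw [heq] at h2
  have h1d : (1:ℂ) / ((Real.sinh (π*x) : ℂ) * (x:ℂ)) = ((1 / (x * Real.sinh (π*x)) : ℝ) : ℂ) := by
    push_cast
    rw [mul_comm]
  rw [h1d] at h2
  exact hasSum_ofReal.mp h2

lemma st13_abs (n : ℤ) (y : ℝ) : ‖(-1:ℝ)^n * Real.exp y‖ = Real.exp y := by
  rw [norm_mul, Real.norm_eq_abs, Real.norm_eq_abs, abs_of_pos (Real.exp_pos _),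
    show |(-1:ℝ)^n| = 1 by
      rcases Int.even_or_odd n with h|h
      · rw [h.neg_one_zpow]; norm_num
      · rw [Odd.neg_one_zpow h]; norm_num, one_mul]

lemma st13_int_exp {a : ℝ} (ha : 0 < a) :
    ∫ t in Set.Ioi (0:ℝ), Real.exp (-a * t) = 1/a := by
  have h := integral_exp_neg_mul_rpow (by norm_num : (0:ℝ) < 1) ha
  simp only [Real.rpow_one] at h
  rw [show (fun t : ℝ => Real.exp (-a * t)) = fun t : ℝ => Real.exp (-(a * t)) by
    funext t; ring_nf]
  simp only [neg_mul] at h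
  rw [h]
  rw [show (-1/1 : ℝ) = -1 by norm_num, Real.rpow_neg_one]
  rw [show (1/1 + 1 : ℝ) = 2 by norm_num, Real.Gamma_two, mul_one, one_div]

lemma st13_summable_exp (t : ℝ) (ht : 0 < t) :
    Summable (fun n : ℤ => Real.exp (-π * (n:ℝ)^2 * t)) := by
  have hr0 : (0:ℝ) ≤ Real.exp (-π * t) := (Real.exp_pos _).le
  have hr1 : Real.exp (-π * t) < 1 := by
    rw [Real.exp_lt_one_iff]
    nlinarith [Real.pi_pos]
  have hnat : Summable (fun n : ℕ => Real.exp (-π * (n:ℝ)^2 * t)) := by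
    apply Summable.of_nonneg_of_le (fun n => (Real.exp_pos _).le) (fun n => ?_)
      (summable_geometric_of_lt_one hr0 hr1)
    rw [← Real.exp_nat_mul]
    apply Real.exp_le_exp.mpr
    have hπ : (0:ℝ) < π := Real.pi_pos
    have hn : (n:ℝ) ≤ (n:ℝ)^2 := by
      rcases Nat.eq_zero_or_pos n with h|h
      · simp [h]
      · have : (1:ℝ) ≤ (n:ℝ) := by exact_mod_cast h
        nlinarith
    nlinarith [mul_nonneg (mul_pos hπ ht).le (by linarith : (0:ℝ) ≤ (n:ℝ)^2 - (n:ℝ))]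
  apply Summable.of_nat_of_neg
  · exact_mod_cast hnat
  · simpa using hnat

/-- For every `x > 0`:
`∫_0^∞ (∑_{n∈ℤ} (-1)^n e^{-πn²t}) e^{-πx²t} dt = 1/(x sinh(πx))`, where the series converges
absolutely for every `t > 0` and the integral converges absolutely. -/
theorem statement13 (x : ℝ) (hx : 0 < x) :
    (∀ t : ℝ, 0 < t →
      Summable (fun n : ℤ => |(-1 : ℝ) ^ n * Real.exp (-Real.pi * (n : ℝ) ^ 2 * t)|)) ∧
    IntegrableOn
      (fun t : ℝ => (∑' n : ℤ, (-1 : ℝ) ^ n * Real.exp (-Real.pi * (n : ℝ) ^ 2 * t)) *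
        Real.exp (-Real.pi * x ^ 2 * t)) (Set.Ioi 0) ∧
    (∫ t in Set.Ioi (0 : ℝ),
        (∑' n : ℤ, (-1 : ℝ) ^ n * Real.exp (-Real.pi * (n : ℝ) ^ 2 * t)) *
          Real.exp (-Real.pi * x ^ 2 * t)) =
      1 / (x * Real.sinh (Real.pi * x)) := by
  have hπ : (0:ℝ) < π := Real.pi_pos
  set A : ℤ → ℝ := fun n => π * (x^2 + (n:ℝ)^2) with hA
  have hApos : ∀ n : ℤ, 0 < A n := fun n => by positivity
  set F : ℤ → ℝ → ℝ := fun n t => (-1:ℝ)^n * Real.exp (-(A n) * t) with hFdef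
  -- part 1
  have part1 : ∀ t : ℝ, 0 < t →
      Summable (fun n : ℤ => |(-1 : ℝ) ^ n * Real.exp (-π * (n : ℝ) ^ 2 * t)|) := by
    intro t ht
    have := st13_summable_exp t ht
    apply this.congr
    intro n
    rw [← Real.norm_eq_abs, st13_abs]
  -- summability of F at fixed t > 0
  have hsumF : ∀ t : ℝ, 0 < t → Summable (fun n : ℤ => F n t) := by
    intro t ht
    apply Summable.of_norm
    have := (st13_summable_exp t ht).mul_right (Real.exp (-π * x^2 * t))
    apply this.congr
    intro n
    rw [hFdef, st13_abs, ← Real.exp_add]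
    congr 1
    rw [hA]
    ring
  -- pointwise identity on Ioi 0
  have hgG : ∀ t ∈ Set.Ioi (0:ℝ),
      (∑' n : ℤ, (-1 : ℝ) ^ n * Real.exp (-π * (n : ℝ) ^ 2 * t)) * Real.exp (-π * x ^ 2 * t)
        = ∑' n : ℤ, F n t := by
    intro t ht
    rw [← tsum_mul_right]
    apply tsum_congr
    intro n
    rw [hFdef, mul_assoc, ← Real.exp_add]
    congr 2
    rw [hA]; ring
  -- each F n integrable on Ioi 0
  have hFint : ∀ n : ℤ, IntegrableOn (F n) (Set.Ioi (0:ℝ)) := by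
    intro n
    exact (exp_neg_integrableOn_Ioi 0 (hApos n)).const_mul _
  -- values of ∫ ‖F n‖
  have hnormint : ∀ n : ℤ, (∫ t in Set.Ioi (0:ℝ), ‖F n t‖) = 1 / A n := by
    intro n
    simp_rw [hFdef, st13_abs]
    exact st13_int_exp (hApos n)
  have hsum1 : Summable (fun n : ℤ => 1 / A n) := by
    have : (fun n : ℤ => 1 / A n) = fun n : ℤ => (1/π) * (1 / (x^2 + (n:ℝ)^2)) := by
      funext n; rw [hA]; simp only [one_div, mul_inv]
    rw [this]
    exact (sum_inv_sq x hx).mul_left _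
  have hsumnorm : Summable (fun n : ℤ => ∫ t in Set.Ioi (0:ℝ), ‖F n t‖) := by
    simp_rw [hnormint]
    exact hsum1
  -- measurability of the tsum
  have hexh : Filter.Tendsto (fun k : ℕ => Finset.Icc (-(k:ℤ)) k) Filter.atTop Filter.atTop := by
    apply Filter.tendsto_atTop_finset_of_monotone
    · intro a b hab
      apply Finset.Icc_subset_Icc <;> omega
    · intro n
      exact ⟨n.natAbs, Finset.mem_Icc.mpr ⟨by omega, by omega⟩⟩
  have hG_meas : AEStronglyMeasurable (fun t : ℝ => ∑' n : ℤ, F n t)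
      (volume.restrict (Set.Ioi 0)) := by
    apply aestronglyMeasurable_of_tendsto_ae Filter.atTop
      (f := fun (k : ℕ) (t : ℝ) => ∑ n ∈ Finset.Icc (-(k:ℤ)) k, F n t)
    · intro k
      apply Continuous.aestronglyMeasurable
      apply continuous_finset_sum
      intro n _
      exact continuous_const.mul (Real.continuous_exp.comp (continuous_const.mul continuous_id))
    · rw [ae_restrict_iff' measurableSet_Ioi]
      apply Filter.Eventually.of_forall
      intro t ht
      exact ((hsumF t ht).hasSum).comp hexh
  -- integrability of the tsum
  have hG_int : Integrable (fun t : ℝ => ∑' n : ℤ, F n t) (volume.restrict (Set.Ioi 0)) := by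
    refine ⟨hG_meas, ?_⟩
    rw [hasFiniteIntegral_iff_norm]
    calc ∫⁻ t, ENNReal.ofReal ‖∑' n : ℤ, F n t‖ ∂(volume.restrict (Set.Ioi 0))
        ≤ ∫⁻ t, ∑' n : ℤ, ENNReal.ofReal ‖F n t‖ ∂(volume.restrict (Set.Ioi 0)) := by
          apply lintegral_mono_ae
          rw [ae_restrict_iff' measurableSet_Ioi]
          apply Filter.Eventually.of_forall
          intro t ht
          have hs : Summable fun n : ℤ => ‖F n t‖ := ((hsumF t ht).abs.congr (by
            intro n; rw [Real.norm_eq_abs]))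
          calc ENNReal.ofReal ‖∑' n : ℤ, F n t‖
              ≤ ENNReal.ofReal (∑' n : ℤ, ‖F n t‖) :=
                ENNReal.ofReal_le_ofReal (norm_tsum_le_tsum_norm hs)
            _ = ∑' n : ℤ, ENNReal.ofReal ‖F n t‖ :=
                ENNReal.ofReal_tsum_of_nonneg (fun n => norm_nonneg _) hs
      _ = ∑' n : ℤ, ∫⁻ t, ENNReal.ofReal ‖F n t‖ ∂(volume.restrict (Set.Ioi 0)) := by
          apply lintegral_tsum
          intro n
          exact (hFint n).norm.aemeasurable.ennreal_ofReal
      _ = ∑' n : ℤ, ENNReal.ofReal (1 / A n) := by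
          apply tsum_congr
          intro n
          rw [← ofReal_integral_eq_lintegral_ofReal (hFint n).norm
            (Filter.Eventually.of_forall fun t => norm_nonneg _), hnormint n]
      _ < ⊤ := by
          rw [← ENNReal.ofReal_tsum_of_nonneg (fun n => by positivity) hsum1]
          exact ENNReal.ofReal_lt_top
  -- part 2
  have part2 : IntegrableOn
      (fun t : ℝ => (∑' n : ℤ, (-1 : ℝ) ^ n * Real.exp (-π * (n : ℝ) ^ 2 * t)) *
        Real.exp (-π * x ^ 2 * t)) (Set.Ioi 0) := by
    apply hG_int.congr
    rw [Filter.EventuallyEq, ae_restrict_iff' measurableSet_Ioi]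
    exact Filter.Eventually.of_forall fun t ht => (hgG t ht).symm
  refine ⟨part1, part2, ?_⟩
  rw [setIntegral_congr_fun measurableSet_Ioi hgG]
  rw [← integral_tsum_of_summable_integral_norm hFint hsumnorm]
  have : ∀ n : ℤ, (∫ t in Set.Ioi (0:ℝ), F n t) = (-1:ℝ)^n * (1 / (π * (x^2 + (n:ℝ)^2))) := by
    intro n
    rw [hFdef]
    simp only
    rw [MeasureTheory.integral_const_mul, st13_int_exp (hApos n), hA]
  rw [tsum_congr this]
  exact (keySum x hx).tsum_eq
end

section
/- For every real x ≠ 0 one has Σ_{n∈ℤ} (−1)^n/(x² + n²) = π/(x·sinh(πx)), where the series converges absolutely. -/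
open Real Complex MeasureTheory


noncomputable def myg (x : ℝ) : ℝ → ℂ := fun t => Complex.cosh (x * (t - π))

lemma key_integral (x : ℝ) (hx : x ≠ 0) (n : ℤ) :
    (∫ t in (0:ℝ)..(2*π), Complex.exp (2 * π * Complex.I * (-n) * t / (2*π)) * myg x t) =
      2 * x * Complex.sinh (π * x) / (x^2 + n^2) := by
  have hπ : (π:ℂ) ≠ 0 := by exact_mod_cast Real.pi_ne_zero
  have hc1 : ((x:ℂ) - n * Complex.I) ≠ 0 := by
    intro h; apply hx; simpa using congrArg Complex.re h
  have hc2 : ((x:ℂ) + n * Complex.I) ≠ 0 := by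
    intro h; apply hx; simpa using congrArg Complex.re h
  have hint : ∀ t : ℝ, Complex.exp (2 * π * Complex.I * (-n) * t / (2*π)) * myg x t
      = Complex.exp (((x:ℂ) - n*Complex.I) * t) * (Complex.exp (-((x:ℂ)*π)) / 2)
        + Complex.exp ((-(x:ℂ) - n*Complex.I) * t) * (Complex.exp ((x:ℂ)*π) / 2) := by
    intro t
    have h2 : Complex.cosh ((x:ℂ)*((t:ℂ)-π)) =
        (Complex.exp ((x:ℂ)*((t:ℂ)-π)) + Complex.exp (-((x:ℂ)*((t:ℂ)-π))))/2 := by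
      rw [eq_div_iff (two_ne_zero), mul_comm, Complex.two_cosh]
    have h1 : (2 * (π:ℂ) * Complex.I * (-(n:ℂ)) * t / (2*π)) = (-((n:ℂ)*Complex.I)) * t := by
      field_simp
    have ea : Complex.exp (((x:ℂ) - n*Complex.I) * t) * Complex.exp (-((x:ℂ)*π))
        = Complex.exp (-((n:ℂ)*Complex.I)*t) * Complex.exp ((x:ℂ)*((t:ℂ)-π)) := by
      rw [← Complex.exp_add, ← Complex.exp_add]; ring_nf
    have eb : Complex.exp ((-(x:ℂ) - n*Complex.I) * t) * Complex.exp ((x:ℂ)*π)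
        = Complex.exp (-((n:ℂ)*Complex.I)*t) * Complex.exp (-((x:ℂ)*((t:ℂ)-π))) := by
      rw [← Complex.exp_add, ← Complex.exp_add]; ring_nf
    show Complex.exp (2 * (π:ℂ) * Complex.I * (-(n:ℂ)) * t / (2*π)) * Complex.cosh ((x:ℂ)*((t:ℂ)-π)) = _
    rw [h1, h2]
    linear_combination -(ea+eb)/2
  have i1 : IntervalIntegrable (fun t : ℝ => Complex.exp (((x:ℂ) - n*Complex.I) * t)
      * (Complex.exp (-((x:ℂ)*π)) / 2)) MeasureTheory.volume 0 (2*π) :=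
    (Continuous.intervalIntegrable (by fun_prop) _ _)
  have i2 : IntervalIntegrable (fun t : ℝ => Complex.exp ((-(x:ℂ) - n*Complex.I) * t)
      * (Complex.exp ((x:ℂ)*π) / 2)) MeasureTheory.volume 0 (2*π) :=
    (Continuous.intervalIntegrable (by fun_prop) _ _)
  rw [intervalIntegral.integral_congr (fun t _ => hint t),
    intervalIntegral.integral_add i1 i2,
    intervalIntegral.integral_mul_const, intervalIntegral.integral_mul_const,
    integral_exp_mul_complex hc1,
    integral_exp_mul_complex (by intro h; apply hc2; linear_combination -h)]
  set P := Complex.exp ((x:ℂ)*π) with hP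
  set Q := Complex.exp (-((x:ℂ)*π)) with hQ
  have hPQ : P * Q = 1 := by rw [hP, hQ, ← Complex.exp_add]; simp
  have hsinh : 2 * Complex.sinh ((π:ℂ)*x) = P - Q := by
    rw [Complex.two_sinh, hP, hQ]; ring_nf
  have e1 : Complex.exp (((x:ℂ) - n*Complex.I) * ((2*π:ℝ):ℂ)) = P * P := by
    rw [hP, ← Complex.exp_add,
      show ((x:ℂ) - n*Complex.I) * ((2*π:ℝ):ℂ) = ((x:ℂ)*π + (x:ℂ)*π) + (-n:ℤ) * (2*π*Complex.I)
        by push_cast; ring,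
      Complex.exp_add, Complex.exp_int_mul_two_pi_mul_I, mul_one]
  have e2 : Complex.exp ((-(x:ℂ) - n*Complex.I) * ((2*π:ℝ):ℂ)) = Q * Q := by
    rw [hQ, ← Complex.exp_add,
      show (-(x:ℂ) - n*Complex.I) * ((2*π:ℝ):ℂ) = (-((x:ℂ)*π) + -((x:ℂ)*π)) + (-n:ℤ) * (2*π*Complex.I)
        by push_cast; ring,
      Complex.exp_add, Complex.exp_int_mul_two_pi_mul_I, mul_one]
  rw [e1, e2]
  have hz : ∀ c : ℂ, Complex.exp (c * ((0:ℝ):ℂ)) = 1 := by intro c; simp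
  rw [hz, hz]
  have hsq : ((x:ℂ)^2 + (n:ℂ)^2) = ((x:ℂ) - n*Complex.I) * ((x:ℂ) + n*Complex.I) := by
    have : Complex.I^2 = -1 := Complex.I_sq
    linear_combination ((n:ℂ)^2) * this
  have hsq0 : ((x:ℂ)^2 + (n:ℂ)^2) ≠ 0 := by rw [hsq]; exact mul_ne_zero hc1 hc2
  have hc2' : (-(x:ℂ) - n * Complex.I) ≠ 0 := by intro h; apply hc2; linear_combination -h
  have hs' : Complex.sinh ((π:ℂ)*(x:ℂ)) = (P - Q)/2 := by linear_combination hsinh/2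
  rw [hs', hsq]
  obtain ⟨A, hA⟩ : ∃ A : ℂ, A = (x:ℂ) - n*Complex.I := ⟨_, rfl⟩
  obtain ⟨B, hB⟩ : ∃ B : ℂ, B = (x:ℂ) + n*Complex.I := ⟨_, rfl⟩
  have hnegB : -(x:ℂ) - n*Complex.I = -B := by rw [hB]; ring
  rw [hnegB, ← hA, ← hB]
  have hABsum : A + B = 2*x := by rw [hA, hB]; ring
  have hA0 : A ≠ 0 := hA ▸ hc1
  have hB0 : B ≠ 0 := hB ▸ hc2
  have hB0' : -B ≠ 0 := neg_ne_zero.mpr hB0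
  field_simp
  linear_combination (P*B - Q*A) * hPQ + (P - Q) * hABsum

lemma summ1 (x : ℝ) (hx : x ≠ 0) : Summable (fun n : ℤ => 1/(x^2+(n:ℝ)^2)) := by
  have hx2 : 0 < x^2 := by positivity
  have hb : Summable (fun n : ℕ => 1/((n:ℝ)+1)^2) := by
    have := (summable_nat_add_iff (f := fun n : ℕ => 1/((n:ℝ))^2) 1).2
      (summable_one_div_nat_pow.mpr one_lt_two)
    exact this.congr (fun n => by push_cast; norm_num)
  have hnat : Summable (fun n : ℕ => 1/(x^2+(n:ℝ)^2)) := by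
    rw [← summable_nat_add_iff 1]
    refine Summable.of_nonneg_of_le (fun n => by positivity) (fun n => ?_) hb
    have h1 : ((n:ℝ)+1)^2 ≤ x^2 + ((n+1:ℕ):ℝ)^2 := by push_cast; nlinarith
    exact one_div_le_one_div_of_le (by positivity) h1
  apply Summable.of_nat_of_neg
  · exact hnat
  · exact hnat.congr (fun n => by push_cast; ring_nf)

lemma mycoeff (x : ℝ) (hx : x ≠ 0) (n : ℤ) [Fact (0 < 2*π)] :
    fourierCoeff (AddCircle.liftIco (2*π) 0 (myg x)) n
      = (x * Complex.sinh (π*x))/(π*((x:ℂ)^2+(n:ℂ)^2)) := by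
  have hπ : (0:ℝ) < 2*π := by positivity
  rw [fourierCoeff_liftIco_eq (myg x) n, fourierCoeffOn_eq_integral]
  have h0 : (0:ℝ) + 2*π - 0 = 2*π := by ring
  simp only [zero_add, sub_zero, smul_eq_mul]
  rw [intervalIntegral.integral_congr
    (g := fun t : ℝ => Complex.exp (2 * π * Complex.I * (-n) * t / (2*π)) * myg x t)
    (fun t _ => by rw [fourier_coe_apply]; push_cast; ring_nf), key_integral x hx n]
  have hsq0 : ((x:ℂ)^2 + (n:ℂ)^2) ≠ 0 := by
    have : (0:ℝ) < x^2 + (n:ℝ)^2 := by positivity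
    intro h
    rw [show ((x:ℂ)^2 + (n:ℂ)^2) = ((x^2 + (n:ℝ)^2 : ℝ) : ℂ) by push_cast; ring] at h
    exact absurd (Complex.ofReal_eq_zero.mp h) (ne_of_gt this)
  have hπc : (π:ℂ) ≠ 0 := by exact_mod_cast Real.pi_ne_zero
  simp only [Complex.real_smul]
  push_cast
  field_simp

/-- For every real `x ≠ 0`: `∑_{n∈ℤ} (-1)^n/(x² + n²) = π/(x sinh(πx))`, with the series
converging absolutely. -/
theorem statement14 (x : ℝ) (hx : x ≠ 0) :
    Summable (fun n : ℤ => |(-1 : ℝ) ^ n / (x ^ 2 + (n : ℝ) ^ 2)|) ∧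
    ∑' n : ℤ, (-1 : ℝ) ^ n / (x ^ 2 + (n : ℝ) ^ 2) =
      Real.pi / (x * Real.sinh (Real.pi * x)) := by
  haveI : Fact ((0:ℝ) < 2*π) := ⟨by positivity⟩
  constructor
  · refine (summ1 x hx).congr (fun n => ?_)
    have h1 : |(-1:ℝ)^n| = 1 := by
      rcases Int.even_or_odd n with h | h
      · rw [h.neg_one_zpow, abs_one]
      · rw [h.neg_one_zpow, abs_neg, abs_one]
    rw [abs_div, h1, abs_of_pos (by positivity : (0:ℝ) < x ^ 2 + (n:ℝ) ^ 2)]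
  have hπ : (π:ℝ) ≠ 0 := Real.pi_ne_zero
  have hcont : Continuous (AddCircle.liftIco (2*π) 0 (myg x)) := by
    apply AddCircle.liftIco_zero_continuous
    · show Complex.cosh ((x:ℂ) * (((0:ℝ):ℂ) - π)) = Complex.cosh ((x:ℂ) * (((2*π:ℝ):ℂ) - π))
      rw [show ((x:ℂ) * (((0:ℝ):ℂ) - π)) = -((x:ℂ)*(((2*π:ℝ):ℂ) - π)) by push_cast; ring,
        Complex.cosh_neg]
    · exact (Complex.continuous_cosh.comp (by fun_prop)).continuousOn
  set F : C(AddCircle (2*π), ℂ) := ⟨_, hcont⟩ with hF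
  have hcoeff : ∀ n : ℤ, fourierCoeff (⇑F) n
      = ((x*Real.sinh (π*x)/(π*(x^2+(n:ℝ)^2)) : ℝ) : ℂ) := by
    intro n
    rw [show ⇑F = AddCircle.liftIco (2*π) 0 (myg x) from rfl, mycoeff x hx n]
    push_cast [Complex.ofReal_sinh]
    ring
  have hsum : Summable (fourierCoeff ⇑F) := by
    have h1 : Summable (fun n : ℤ => x*Real.sinh (π*x)/(π*(x^2+(n:ℝ)^2))) := by
      refine ((summ1 x hx).mul_left (x*Real.sinh (π*x)/π)).congr (fun n => ?_)
      field_simp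
    exact (Complex.summable_ofReal.mpr h1).congr (fun n => (hcoeff n).symm)
  have hps := has_pointwise_sum_fourier_series_of_summable hsum ((π:ℝ) : AddCircle (2*π))
  have hval : F (((π:ℝ) : AddCircle (2*π))) = 1 := by
    show AddCircle.liftIco (2*π) 0 (myg x) _ = 1
    rw [AddCircle.liftIco_zero_coe_apply ⟨Real.pi_pos.le, by linarith [Real.pi_pos]⟩]
    show Complex.cosh _ = 1
    rw [show (x:ℂ) * (((π:ℝ):ℂ) - π) = 0 by push_cast; ring, Complex.cosh_zero]
  have hfour : ∀ i : ℤ, fourier i (((π:ℝ) : AddCircle (2*π))) = (-1:ℂ)^i := by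
    intro i
    rw [fourier_coe_apply]
    rw [show 2*(π:ℂ)*Complex.I*(i:ℂ)*((π:ℝ):ℂ)/(((2*π:ℝ)):ℂ)
        = (i:ℂ)*((π:ℂ)*Complex.I) by
          have hπc : (π:ℂ) ≠ 0 := Complex.ofReal_ne_zero.mpr Real.pi_ne_zero
          push_cast
          field_simp]
    rw [Complex.exp_int_mul, Complex.exp_pi_mul_I]
  rw [hval] at hps
  set C : ℂ := ((x*Real.sinh (π*x)/π : ℝ) : ℂ) with hC0
  have hsinh : Real.sinh (π*x) ≠ 0 := Real.sinh_ne_zero.mpr (mul_ne_zero hπ hx)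
  have hC : C ≠ 0 := Complex.ofReal_ne_zero.mpr (div_ne_zero (mul_ne_zero hx hsinh) hπ)
  have hsq0 : ∀ i : ℤ, ((x:ℂ)^2 + (i:ℂ)^2) ≠ 0 := by
    intro i
    have h0 : (0:ℝ) < x^2 + (i:ℝ)^2 := by positivity
    intro h
    rw [show ((x:ℂ)^2 + (i:ℂ)^2) = ((x^2 + (i:ℝ)^2 : ℝ) : ℂ) by push_cast; ring] at h
    exact absurd (Complex.ofReal_eq_zero.mp h) (ne_of_gt h0)
  have hπc : (π:ℂ) ≠ 0 := Complex.ofReal_ne_zero.mpr Real.pi_ne_zero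
  have hfun : (fun i : ℤ => fourierCoeff (⇑F) i • fourier i ((π:ℝ) : AddCircle (2*π)))
      = (fun i : ℤ => C * ((-1:ℂ)^i / ((x:ℂ)^2+(i:ℂ)^2))) := by
    funext i
    rw [hcoeff, hfour, smul_eq_mul, hC0]
    push_cast
    field_simp
  rw [hfun] at hps
  have h3 := hps.mul_left C⁻¹
  have heq : (fun i : ℤ => C⁻¹ * (C * ((-1:ℂ)^i / ((x:ℂ)^2+(i:ℂ)^2))))
      = (fun i : ℤ => (((-1:ℝ)^i/(x^2+(i:ℝ)^2) : ℝ) : ℂ)) := by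
    funext i
    rw [inv_mul_cancel_left₀ hC]
    push_cast
    ring
  rw [heq, mul_one] at h3
  have hCinv : C⁻¹ = ((π/(x*Real.sinh (π*x)) : ℝ) : ℂ) := by
    rw [hC0, ← Complex.ofReal_inv, inv_div]
  rw [hCinv] at h3
  exact (Complex.hasSum_ofReal.mp h3).tsum_eq
end

section
/- Let k ≥ 0 and C > 0 be real numbers, and let g : [1, ∞) → ℝ be twice continuously differentiable with |g(x)| ≤ C·x^{−k} and |g''(x)| ≤ 1 for all x ≥ 1. Then |g'(x)| ≤ 2·√C·x^{−k/2} for all x ≥ 1. -/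
open Real
lemma my_idw_congr_set {f : ℝ → ℝ} {s t : Set ℝ} {x : ℝ} (h : s =ᶠ[nhds x] t) (n : ℕ) :
    iteratedDerivWithin n f s x = iteratedDerivWithin n f t x := by
  simp [iteratedDerivWithin_eq_iteratedFDerivWithin, iteratedFDerivWithin_congr_set h n]


/-- If `g` is twice continuously differentiable on `[1,∞)` with `|g(x)| ≤ C x^{-k}` and
`|g''(x)| ≤ 1` there, then `|g'(x)| ≤ 2 √C x^{-k/2}` on `[1,∞)`. -/
theorem statement16 (k C : ℝ) (hk : 0 ≤ k) (hC : 0 < C) (g : ℝ → ℝ)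
    (hg : ContDiffOn ℝ 2 g (Set.Ici 1))
    (hb : ∀ x : ℝ, 1 ≤ x → |g x| ≤ C * x ^ (-k))
    (hb2 : ∀ x : ℝ, 1 ≤ x → |iteratedDerivWithin 2 g (Set.Ici 1) x| ≤ 1) :
    ∀ x : ℝ, 1 ≤ x → |derivWithin g (Set.Ici 1) x| ≤ 2 * Real.sqrt C * x ^ (-(k / 2)) := by
  intro x hx
  have hx0 : (0:ℝ) < x := lt_of_lt_of_le one_pos hx
  set h : ℝ := 2 * Real.sqrt C * x ^ (-(k / 2)) with hh
  have hh0 : 0 < h := by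
    apply mul_pos (mul_pos two_pos (Real.sqrt_pos.mpr hC)) (Real.rpow_pos_of_pos hx0 _)
  have hxlt : x < x + h := by linarith
  have hsub : Set.Icc x (x + h) ⊆ Set.Ici 1 := fun y hy => le_trans hx hy.1
  -- eventual equality of sets at interior points
  have hev : ∀ y ∈ Set.Ioo x (x + h), Set.Icc x (x + h) =ᶠ[nhds y] Set.Ici 1 := by
    intro y hy
    apply Filter.eventuallyEq_of_mem (isOpen_Ioo.mem_nhds hy)
    intro z hz
    have h1 : (1:ℝ) ≤ z := le_trans hx hz.1.le
    simp only [Set.mem_Icc, Set.mem_Ici, eq_iff_iff]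
    constructor
    · intro _; exact h1
    · intro _; exact ⟨hz.1.le, hz.2.le⟩
  have hg1 : ContDiffOn ℝ 1 g (Set.Icc x (x + h)) := (hg.of_le one_le_two).mono hsub
  have hdiff : DifferentiableOn ℝ (iteratedDerivWithin 1 g (Set.Icc x (x + h)))
      (Set.Ioo x (x + h)) := by
    intro y hy
    have hyev := hev y hy
    have hfun : (iteratedDerivWithin 1 g (Set.Icc x (x + h)))
        =ᶠ[nhds y] (iteratedDerivWithin 1 g (Set.Ici 1)) := by
      filter_upwards [isOpen_Ioo.mem_nhds hy] with z hz
      exact my_idw_congr_set (hev z hz) 1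
    have hd : DifferentiableWithinAt ℝ (iteratedDerivWithin 1 g (Set.Ici 1)) (Set.Ici 1) y :=
      hg.differentiableOn_iteratedDerivWithin (by norm_num) (uniqueDiffOn_Ici 1) y
        (hsub ⟨hy.1.le, hy.2.le⟩)
    have hy1 : Set.Ici (1:ℝ) ∈ nhds y :=
      Ici_mem_nhds (lt_of_le_of_lt hx hy.1)
    have : DifferentiableAt ℝ (iteratedDerivWithin 1 g (Set.Ici 1)) y :=
      hd.differentiableAt hy1
    exact ((this.congr_of_eventuallyEq hfun)).differentiableWithinAt
  obtain ⟨ξ, hξ, hT⟩ := taylor_mean_remainder_lagrange (n := 1) hxlt.ne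
    (by rw [Set.uIcc_of_le hxlt.le]; exact hg1)
    (by rw [Set.uIcc_of_le hxlt.le, Set.uIoo_of_le hxlt.le]; exact hdiff)
  rw [Set.uIcc_of_le hxlt.le] at hT
  rw [Set.uIoo_of_le hxlt.le] at hξ
  -- unfold taylor polynomial
  rw [taylor_within_apply] at hT
  simp only [Finset.sum_range_succ, Finset.sum_range_zero, iteratedDerivWithin_zero,
    iteratedDerivWithin_one] at hT
  have hderiv_eq : derivWithin g (Set.Icc x (x + h)) x = derivWithin g (Set.Ici 1) x := by
    apply derivWithin_subset hsub ((uniqueDiffOn_Icc hxlt) x ⟨le_refl x, hxlt.le⟩)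
    exact (hg.differentiableOn two_ne_zero) x hx
  have h2eq : iteratedDerivWithin 2 g (Set.Icc x (x + h)) ξ
      = iteratedDerivWithin 2 g (Set.Ici 1) ξ := my_idw_congr_set (hev ξ hξ) 2
  rw [hderiv_eq, h2eq] at hT
  -- now arithmetic
  have hTs : g (x + h) - (g x + h * derivWithin g (Set.Ici 1) x)
      = iteratedDerivWithin 2 g (Set.Ici 1) ξ * h ^ 2 / 2 := by
    convert hT using 2 <;> ring_nf <;> simp [smul_eq_mul] <;> ring
  -- bounds
  have hξ1 : (1:ℝ) ≤ ξ := le_trans hx hξ.1.le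
  have hbd2 : |iteratedDerivWithin 2 g (Set.Ici 1) ξ| ≤ 1 := hb2 ξ hξ1
  have hbx : |g x| ≤ C * x ^ (-k) := hb x hx
  have hbxh : |g (x + h)| ≤ C * x ^ (-k) := by
    refine (hb (x + h) (by linarith)).trans ?_
    have := Real.rpow_le_rpow_of_nonpos hx0 (by linarith : x ≤ x + h) (by linarith : -k ≤ 0)
    nlinarith
  have hsq : h ^ 2 = 4 * C * x ^ (-k) := by
    have h1 : (x ^ (-(k / 2)) : ℝ) ^ 2 = x ^ (-k) := by
      rw [sq, ← Real.rpow_add hx0]; ring_nf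
    have h2 : Real.sqrt C ^ 2 = C := Real.sq_sqrt hC.le
    rw [hh]; nlinarith
  have key : h * |derivWithin g (Set.Ici 1) x| ≤ 2 * (C * x ^ (-k)) + h ^ 2 / 2 := by
    have e1 : h * derivWithin g (Set.Ici 1) x
        = g (x + h) - g x - iteratedDerivWithin 2 g (Set.Ici 1) ξ * h ^ 2 / 2 := by
      linarith [hTs]
    calc h * |derivWithin g (Set.Ici 1) x| = |h * derivWithin g (Set.Ici 1) x| := by
          rw [abs_mul, abs_of_pos hh0]
      _ = |g (x + h) - g x - iteratedDerivWithin 2 g (Set.Ici 1) ξ * h ^ 2 / 2| := by rw [e1]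
      _ ≤ |g (x + h)| + |g x| + |iteratedDerivWithin 2 g (Set.Ici 1) ξ * h ^ 2 / 2| := by
          exact (abs_sub _ _).trans (by linarith [abs_sub (g (x + h)) (g x)])
      _ ≤ 2 * (C * x ^ (-k)) + h ^ 2 / 2 := by
          have : |iteratedDerivWithin 2 g (Set.Ici 1) ξ * h ^ 2 / 2| ≤ h ^ 2 / 2 := by
            rw [abs_div, abs_mul, abs_of_nonneg (sq_nonneg h), abs_two]
            nlinarith [abs_nonneg (iteratedDerivWithin 2 g (Set.Ici 1) ξ), sq_nonneg h]
          linarith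
  -- conclude
  have hfin : h * |derivWithin g (Set.Ici 1) x| ≤ h * h := by
    nlinarith [key, hsq]
  have := (mul_le_mul_iff_right₀ hh0).mp hfin
  simpa [hh] using this
end

section
/- Let m be a nonnegative integer and let g : ℍ → ℂ be a holomorphic function on the upper half-plane ℍ = {z ∈ ℂ : Im z > 0} satisfying g(z+2) = g(z) for all z ∈ ℍ, admitting an absolutely convergent expansion g(z) = e^{−iπmz} + Σ_{n=0}^∞ c_n e^{iπnz} valid for all z ∈ ℍ, and such that there exist constants C, c > 0 with |g(z)| ≤ C·exp(−c/Im z) for all z ∈ ℍ with |z − 1| ≤ 1/2 or |z + 1| ≤ 1/2. Then for every real x with x² > m one has (1/2)·∫_γ g(z) e^{iπx²z} dz = sin(πx²)·∫_0^∞ g(1+it) e^{−πx²t} dt, where γ is the semicircular contour from −1 to 1 and the integral on the right converges absolutely. -/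
open Real Complex MeasureTheory Set Filter Topology

namespace S17

noncomputable def gam (t : ℝ) : ℂ := Complex.exp (Complex.I * ((Real.pi : ℂ) - t))

lemma gam_eq (t : ℝ) : gam t = Complex.exp (((Real.pi - t : ℝ) : ℂ) * Complex.I) := by
  unfold gam; congr 1; push_cast; ring

lemma gam_im (t : ℝ) : (gam t).im = Real.sin t := by
  rw [gam_eq, Complex.exp_ofReal_mul_I_im, Real.sin_pi_sub]

lemma gam_re (t : ℝ) : (gam t).re = -Real.cos t := by
  rw [gam_eq, Complex.exp_ofReal_mul_I_re, Real.cos_pi_sub]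

lemma gam_abs (t : ℝ) : ‖gam t‖ = 1 := by
  rw [gam_eq, Complex.norm_exp_ofReal_mul_I]

lemma gam_hasDeriv (t : ℝ) : HasDerivAt gam (-Complex.I * gam t) t := by
  have h1 : HasDerivAt (fun z : ℂ => Complex.I * ((Real.pi : ℂ) - z)) (-Complex.I) (t : ℂ) := by
    simpa using (((hasDerivAt_id (t : ℂ)).const_sub (Real.pi : ℂ)).const_mul Complex.I)
  have h3 := h1.cexp.comp_ofReal
  unfold gam; simpa [mul_comm] using h3

lemma gam_cont : Continuous gam := by unfold gam; continuity

lemma normexp (r : ℝ) (z : ℂ) :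
    ‖Complex.exp ((r : ℂ) * Complex.I * z)‖ = Real.exp (-(r * z.im)) := by
  rw [Complex.norm_exp]
  congr 1
  simp [Complex.mul_re, Complex.mul_im]

lemma im_add_smul_I (w : ℂ) (s : ℝ) : (w + s * Complex.I).im = w.im + s := by simp

end S17

open S17

set_option maxHeartbeats 1000000

/-- The contour integral of `h` over the semicircle `{e^{iθ} : 0 < θ < π}` in the upper
half-plane, traversed from `-1` to `1`, parametrized by `z(t) = e^{i(π - t)}`, `t ∈ [0, π]`. -/
noncomputable def semicircleIntegral (h : ℂ → ℂ) : ℂ :=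
  ∫ t in (0:ℝ)..Real.pi,
    h (Complex.exp (Complex.I * ((Real.pi : ℂ) - t))) *
      (-Complex.I * Complex.exp (Complex.I * ((Real.pi : ℂ) - t)))

/-- For a `2`-periodic holomorphic `g` on the upper half-plane with absolutely convergent
expansion `g(z) = e^{-iπmz} + ∑_{n≥0} c_n e^{iπnz}` and exponential decay near the cusps `±1`,
and every real `x` with `x² > m`, one has
`(1/2)∫_γ g(z) e^{iπx²z} dz = sin(πx²) ∫_0^∞ g(1+it) e^{-πx²t} dt`, where the right-hand
integral converges absolutely. -/
theorem statement17 (m : ℕ) (g : ℂ → ℂ)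
    (hol : DifferentiableOn ℂ g {z : ℂ | 0 < z.im})
    (hper : ∀ z : ℂ, 0 < z.im → g (z + 2) = g z)
    (c : ℕ → ℂ)
    (hsum : ∀ z : ℂ, 0 < z.im →
      Summable (fun n : ℕ => ‖c n * Complex.exp (Real.pi * Complex.I * n * z)‖))
    (hexp : ∀ z : ℂ, 0 < z.im →
      g z = Complex.exp (-(Real.pi : ℂ) * Complex.I * m * z) +
        ∑' n : ℕ, c n * Complex.exp (Real.pi * Complex.I * n * z))
    (C c' : ℝ) (hC : 0 < C) (hc' : 0 < c')
    (hdecay : ∀ z : ℂ, 0 < z.im →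
      (‖z - 1‖ ≤ 1 / 2 ∨ ‖z + 1‖ ≤ 1 / 2) →
      ‖g z‖ ≤ C * Real.exp (-c' / z.im)) :
    ∀ x : ℝ, (m : ℝ) < x ^ 2 →
      IntegrableOn (fun t : ℝ => g (1 + t * Complex.I) *
        Complex.exp (-(Real.pi : ℂ) * (x : ℂ) ^ 2 * t)) (Set.Ioi 0) ∧
      (1 / 2) * semicircleIntegral
          (fun z => g z * Complex.exp (Real.pi * Complex.I * (x : ℂ) ^ 2 * z)) =
        ((Real.sin (Real.pi * x ^ 2) : ℝ) : ℂ) *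
          ∫ t in Set.Ioi (0 : ℝ), g (1 + t * Complex.I) *
            Complex.exp (-(Real.pi : ℂ) * (x : ℂ) ^ 2 * t) := by
  intro x hx
  have hx0 : (0 : ℝ) < x ^ 2 := lt_of_le_of_lt (Nat.cast_nonneg m) hx
  have hπx : (0 : ℝ) < Real.pi * x ^ 2 := mul_pos Real.pi_pos hx0
  set a : ℝ := Real.pi * (x ^ 2 - m) with ha_def
  have ha : 0 < a := mul_pos Real.pi_pos (by linarith)
  set h : ℂ → ℂ := fun z => g z * Complex.exp (Real.pi * Complex.I * (x : ℂ) ^ 2 * z) with h_def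
  set f : ℝ → ℂ := fun t => g (1 + t * Complex.I) *
    Complex.exp (-(Real.pi : ℂ) * (x : ℂ) ^ 2 * t) with f_def
  set Kf : ℝ → ℝ := fun σ => ∑' n : ℕ, ‖c n‖ * Real.exp (-(Real.pi * n * σ)) with Kf_def
  have hopen : IsOpen {z : ℂ | 0 < z.im} := isOpen_lt continuous_const Complex.continuous_im
  -- rewriting the exponent
  have e1 : ∀ (n : ℕ) (z : ℂ), (Real.pi : ℂ) * Complex.I * n * z =
      ((Real.pi * n : ℝ) : ℂ) * Complex.I * z := by intro n z; push_cast; ring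
  have e2 : ∀ (z : ℂ) (n : ℕ), ‖c n * Complex.exp (Real.pi * Complex.I * n * z)‖ =
      ‖c n‖ * Real.exp (-(Real.pi * n * z.im)) := by
    intro z n; rw [norm_mul, e1, normexp]
  have hKsum : ∀ σ : ℝ, 0 < σ → Summable (fun n : ℕ => ‖c n‖ * Real.exp (-(Real.pi * n * σ))) := by
    intro σ hσ
    have := hsum ((σ : ℂ) * Complex.I) (by simp [hσ])
    refine this.congr fun n => ?_
    rw [e2]; simp
  have hK0 : ∀ σ : ℝ, 0 ≤ Kf σ := fun σ =>
    tsum_nonneg fun n => mul_nonneg (norm_nonneg _) (Real.exp_pos _).le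
  have gbound : ∀ σ : ℝ, 0 < σ → ∀ z : ℂ, σ ≤ z.im →
      ‖g z‖ ≤ Real.exp (Real.pi * m * z.im) + Kf σ := by
    intro σ hσ z hz
    have him : 0 < z.im := lt_of_lt_of_le hσ hz
    rw [hexp z him]
    refine (norm_add_le _ _).trans (add_le_add ?_ ?_)
    · have hre : (-(Real.pi : ℂ) * Complex.I * m * z) =
          ((-(Real.pi * m) : ℝ) : ℂ) * Complex.I * z := by push_cast; ring
      rw [hre, normexp]
      apply le_of_eq; congr 1; ring
    · calc ‖∑' n : ℕ, c n * Complex.exp (Real.pi * Complex.I * n * z)‖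
          ≤ ∑' n : ℕ, ‖c n * Complex.exp (Real.pi * Complex.I * n * z)‖ :=
            norm_tsum_le_tsum_norm (hsum z him)
        _ = ∑' n : ℕ, ‖c n‖ * Real.exp (-(Real.pi * n * z.im)) := tsum_congr fun n => e2 z n
        _ ≤ Kf σ := by
            refine Summable.tsum_le_tsum ?_ (((hsum z him).congr fun n => (e2 z n))) (hKsum σ hσ)
            intro n
            refine mul_le_mul_of_nonneg_left ?_ (norm_nonneg _)
            apply Real.exp_le_exp.2
            have : Real.pi * n * σ ≤ Real.pi * n * z.im :=
              mul_le_mul_of_nonneg_left hz (by positivity)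
            linarith
  have hnorm : ∀ z : ℂ, ‖h z‖ = ‖g z‖ * Real.exp (-(Real.pi * x ^ 2 * z.im)) := by
    intro z
    rw [h_def]; dsimp only
    rw [norm_mul]
    congr 1
    have hre : (Real.pi : ℂ) * Complex.I * (x : ℂ) ^ 2 * z =
        ((Real.pi * x ^ 2 : ℝ) : ℂ) * Complex.I * z := by push_cast; ring
    rw [hre, normexp]
  have hbound : ∀ σ : ℝ, 0 < σ → ∀ z : ℂ, σ ≤ z.im →
      ‖h z‖ ≤ Real.exp (-(a * z.im)) + Kf σ * Real.exp (-(Real.pi * x ^ 2 * z.im)) := by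
    intro σ hσ z hz
    have hb := gbound σ hσ z hz
    rw [hnorm z]
    calc ‖g z‖ * Real.exp (-(Real.pi * x ^ 2 * z.im))
        ≤ (Real.exp (Real.pi * m * z.im) + Kf σ) * Real.exp (-(Real.pi * x ^ 2 * z.im)) :=
          mul_le_mul_of_nonneg_right hb (Real.exp_pos _).le
      _ = Real.exp (-(a * z.im)) + Kf σ * Real.exp (-(Real.pi * x ^ 2 * z.im)) := by
          rw [add_mul, ← Real.exp_add]
          congr 2
          rw [ha_def]; ring
  have hdOn : DifferentiableOn ℂ h {z : ℂ | 0 < z.im} := by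
    apply hol.mul
    apply Differentiable.differentiableOn
    apply Differentiable.cexp
    exact (differentiable_const _).mul differentiable_id
  have hdiffat : ∀ z : ℂ, 0 < z.im → DifferentiableAt ℂ h z := fun z hz =>
    hdOn.differentiableAt (hopen.mem_nhds hz)
  have hcontOn : ContinuousOn h {z : ℂ | 0 < z.im} := hdOn.continuousOn
  have hderivCont : ContinuousOn (deriv h) {z : ℂ | 0 < z.im} :=
    ((hdOn.analyticOnNhd hopen).deriv).continuousOn
  have dbound : ∀ δ : ℝ, 0 < δ → ∀ w : ℂ, δ ≤ w.im →
      ‖deriv h w‖ ≤ (Real.exp (-(a * (w.im - δ / 2))) +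
        Kf (δ / 2) * Real.exp (-(Real.pi * x ^ 2 * (w.im - δ / 2)))) / (δ / 2) := by
    intro δ hδ w hw
    have h2 : (0 : ℝ) < δ / 2 := by positivity
    have him : ∀ z : ℂ, dist z w ≤ δ / 2 → w.im - δ / 2 ≤ z.im := by
      intro z hz
      have h3 : |(z - w).im| ≤ δ / 2 :=
        le_trans (Complex.abs_im_le_norm _) (by rwa [← Complex.dist_eq])
      rw [Complex.sub_im] at h3
      have := abs_le.1 h3
      linarith [this.1]
    have hsub : closure (Metric.ball w (δ / 2)) ⊆ {z : ℂ | 0 < z.im} := by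
      rw [closure_ball w (ne_of_gt h2)]
      intro z hz
      simp only [Metric.mem_closedBall] at hz
      have := him z hz
      simp only [Set.mem_setOf_eq]
      linarith
    refine Complex.norm_deriv_le_of_forall_mem_sphere_norm_le h2
      (DifferentiableOn.diffContOnCl (hdOn.mono hsub)) ?_
    intro z hz
    simp only [Metric.mem_sphere] at hz
    have hzim : w.im - δ / 2 ≤ z.im := him z hz.le
    have hz2 : δ / 2 ≤ z.im := by linarith
    refine (hbound (δ / 2) h2 z hz2).trans (add_le_add ?_ ?_)
    · apply Real.exp_le_exp.2
      have : a * (w.im - δ / 2) ≤ a * z.im := mul_le_mul_of_nonneg_left hzim ha.le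
      linarith
    · refine mul_le_mul_of_nonneg_left ?_ (hK0 _)
      apply Real.exp_le_exp.2
      have : Real.pi * x ^ 2 * (w.im - δ / 2) ≤ Real.pi * x ^ 2 * z.im :=
        mul_le_mul_of_nonneg_left hzim hπx.le
      linarith
  -- inner FTC on vertical rays
  have innerFTC : ∀ w : ℂ, 0 < w.im →
      (∫ s in Set.Ioi (0 : ℝ), deriv h (w + s * Complex.I)) = Complex.I * h w := by
    intro w hw
    have hray : ∀ s : ℝ, 0 ≤ s → 0 < (w + s * Complex.I).im := by
      intro s hs; rw [im_add_smul_I]; linarith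
    have hd : ∀ s ∈ Set.Ici (0 : ℝ), HasDerivAt (fun s : ℝ => h (w + s * Complex.I))
        (deriv h (w + s * Complex.I) * Complex.I) s := by
      intro s hs
      have hinner : HasDerivAt (fun s : ℝ => w + (s : ℂ) * Complex.I) Complex.I s := by
        have h0 : HasDerivAt (fun z : ℂ => w + z * Complex.I) Complex.I (s : ℂ) := by
          simpa using ((hasDerivAt_id (s : ℂ)).mul_const Complex.I).const_add w
        exact h0.comp_ofReal
      have houter : HasDerivAt h (deriv h (w + s * Complex.I)) (w + s * Complex.I) :=
        (hdiffat _ (hray s hs)).hasDerivAt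
      simpa [Function.comp_def] using houter.comp s hinner
    have hmeas : AEStronglyMeasurable (fun s : ℝ => deriv h (w + s * Complex.I) * Complex.I)
        (volume.restrict (Set.Ioi 0)) := by
      apply ContinuousOn.aestronglyMeasurable _ measurableSet_Ioi
      apply ContinuousOn.mul _ continuousOn_const
      have hc : Continuous (fun s : ℝ => w + (s : ℂ) * Complex.I) :=
        continuous_const.add (Complex.continuous_ofReal.mul continuous_const)
      apply hderivCont.comp hc.continuousOn
      intro s hs
      exact hray s (le_of_lt hs)
    have hint : IntegrableOn (fun s : ℝ => deriv h (w + s * Complex.I) * Complex.I)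
        (Set.Ioi 0) := by
      refine Integrable.mono' (g := fun s => (Real.exp (-(a * s)) +
        Kf (w.im / 2) * Real.exp (-(Real.pi * x ^ 2 * s))) / (w.im / 2)) ?_ hmeas ?_
      · apply Integrable.div_const
        refine Integrable.add ?_ (Integrable.const_mul ?_ _)
        · simpa [neg_mul, IntegrableOn] using exp_neg_integrableOn_Ioi 0 ha
        · simpa [neg_mul, IntegrableOn] using exp_neg_integrableOn_Ioi 0 hπx
      · filter_upwards [self_mem_ae_restrict measurableSet_Ioi] with s hs
        have hs0 : (0 : ℝ) < s := hs
        rw [norm_mul, Complex.norm_I, mul_one]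
        have hd2 := dbound w.im hw (w + s * Complex.I) (by rw [im_add_smul_I]; linarith)
        refine hd2.trans ?_
        have him : s ≤ (w + s * Complex.I).im - w.im / 2 := by rw [im_add_smul_I]; linarith
        gcongr
        all_goals nlinarith [him]
    have hlim : Tendsto (fun s : ℝ => h (w + s * Complex.I)) atTop (𝓝 0) := by
      have t0 : Tendsto (fun s : ℝ => -(a * s)) atTop atBot :=
        tendsto_neg_atTop_atBot.comp (Tendsto.const_mul_atTop ha tendsto_id)
      have t0' : Tendsto (fun s : ℝ => -(Real.pi * x ^ 2 * s)) atTop atBot :=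
        tendsto_neg_atTop_atBot.comp (Tendsto.const_mul_atTop hπx tendsto_id)
      have t1 : Tendsto (fun s : ℝ => Real.exp (-(a * s)) +
          Kf w.im * Real.exp (-(Real.pi * x ^ 2 * s))) atTop (𝓝 0) := by
        have := (Real.tendsto_exp_atBot.comp t0).add
          ((Real.tendsto_exp_atBot.comp t0').const_mul (Kf w.im))
        simpa using this
      apply squeeze_zero_norm' _ t1
      filter_upwards [eventually_ge_atTop 0] with s hs
      have := hbound w.im hw (w + s * Complex.I) (by rw [im_add_smul_I]; linarith)
      refine this.trans ?_
      have him : s ≤ (w + s * Complex.I).im := by rw [im_add_smul_I]; linarith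
      gcongr
      all_goals nlinarith [him]
    have hFTC := integral_Ioi_of_hasDerivAt_of_tendsto' hd hint hlim
    rw [MeasureTheory.integral_mul_const] at hFTC
    have hw0 : w + ((0 : ℝ) : ℂ) * Complex.I = w := by simp
    rw [hw0, zero_sub] at hFTC
    have h2 := (eq_mul_inv_iff_mul_eq₀ Complex.I_ne_zero).2 hFTC
    rw [h2, Complex.inv_I]
    ring
  set J : ℝ → ℂ := fun t => ∫ s in Set.Ioi (0 : ℝ), h (gam t + s * Complex.I) with J_def
  have hJderiv : ∀ t₀ ∈ Set.Ioo (0 : ℝ) Real.pi, HasDerivAt J (gam t₀ * h (gam t₀)) t₀ := by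
    intro t₀ ht₀
    set δ := Real.sin t₀ with δdef
    have hδ : 0 < δ := Real.sin_pos_of_pos_of_lt_pi ht₀.1 ht₀.2
    obtain ⟨r, hr, hball⟩ : ∃ r > 0, ∀ t ∈ Metric.ball t₀ r, δ / 2 < Real.sin t := by
      have hmem : {t : ℝ | δ / 2 < Real.sin t} ∈ 𝓝 t₀ :=
        (isOpen_lt continuous_const Real.continuous_sin).mem_nhds (by
          simp only [Set.mem_setOf_eq]; linarith)
      rcases Metric.mem_nhds_iff.1 hmem with ⟨r, hr, hsub⟩
      exact ⟨r, hr, fun t ht => hsub ht⟩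
    have him : ∀ t ∈ Metric.ball t₀ r, ∀ s : ℝ, 0 ≤ s →
        δ / 2 + s ≤ (gam t + s * Complex.I).im := by
      intro t ht s hs
      rw [im_add_smul_I, gam_im]
      have := hball t ht
      linarith
    have hcont_ray : ∀ t : ℝ, Continuous (fun s : ℝ => gam t + (s : ℂ) * Complex.I) := fun t =>
      continuous_const.add (Complex.continuous_ofReal.mul continuous_const)
    have hmeas : ∀ᶠ t in 𝓝 t₀, AEStronglyMeasurable (fun s : ℝ => h (gam t + s * Complex.I))
        (volume.restrict (Set.Ioi 0)) := by
      filter_upwards [Metric.ball_mem_nhds t₀ hr] with t ht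
      apply ContinuousOn.aestronglyMeasurable _ measurableSet_Ioi
      apply hcontOn.comp (hcont_ray t).continuousOn
      intro s hs
      have := him t ht s (le_of_lt hs)
      have hs0 : (0:ℝ) < s := hs
      simp only [Set.mem_setOf_eq]
      linarith
    have hFint : Integrable (fun s : ℝ => h (gam t₀ + s * Complex.I))
        (volume.restrict (Set.Ioi 0)) := by
      refine Integrable.mono' (g := fun s => Real.exp (-(a * s)) +
        Kf (δ / 2) * Real.exp (-(Real.pi * x ^ 2 * s))) ?_ ?_ ?_
      · refine Integrable.add ?_ (Integrable.const_mul ?_ _)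
        · simpa [neg_mul, IntegrableOn] using exp_neg_integrableOn_Ioi 0 ha
        · simpa [neg_mul, IntegrableOn] using exp_neg_integrableOn_Ioi 0 hπx
      · exact hmeas.self_of_nhds
      · filter_upwards [self_mem_ae_restrict measurableSet_Ioi] with s hs
        have hs0 : (0 : ℝ) < s := hs
        have himt := him t₀ (Metric.mem_ball_self hr) s hs0.le
        have hb := hbound (δ / 2) (by linarith) (gam t₀ + s * Complex.I) (by linarith)
        refine hb.trans ?_
        gcongr <;> first
          | exact hK0 _
          | nlinarith [himt]
    have hF'meas : AEStronglyMeasurable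
        (fun s : ℝ => deriv h (gam t₀ + s * Complex.I) * (-Complex.I * gam t₀))
        (volume.restrict (Set.Ioi 0)) := by
      apply ContinuousOn.aestronglyMeasurable _ measurableSet_Ioi
      apply ContinuousOn.mul _ continuousOn_const
      apply hderivCont.comp (hcont_ray t₀).continuousOn
      intro s hs
      have := him t₀ (Metric.mem_ball_self hr) s (le_of_lt hs)
      have hs0 : (0:ℝ) < s := hs
      simp only [Set.mem_setOf_eq]
      linarith
    have hbnd : ∀ᵐ (s : ℝ) ∂(volume.restrict (Set.Ioi (0:ℝ))), ∀ t ∈ Metric.ball t₀ r,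
        ‖deriv h (gam t + (s:ℂ) * Complex.I) * (-Complex.I * gam t)‖ ≤
          (Real.exp (-(a * s)) + Kf (δ / 4) * Real.exp (-(Real.pi * x ^ 2 * s))) / (δ / 4) := by
      filter_upwards [self_mem_ae_restrict measurableSet_Ioi] with s hs
      intro t ht
      have hs0 : (0 : ℝ) < s := hs
      have hnorm1 : ‖(-Complex.I * gam t)‖ = 1 := by
        rw [norm_mul, norm_neg, Complex.norm_I, one_mul, gam_abs]
      rw [norm_mul, hnorm1, mul_one]
      have himt := him t ht s hs0.le
      have hd2 := dbound (δ / 2) (by linarith) (gam t + s * Complex.I) (by linarith)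
      refine hd2.trans ?_
      rw [show δ / 2 / 2 = δ / 4 by ring] at hd2 ⊢
      gcongr <;> first
        | exact hK0 _
        | nlinarith [himt]
    have hbint : Integrable (fun s : ℝ => (Real.exp (-(a * s)) +
        Kf (δ / 4) * Real.exp (-(Real.pi * x ^ 2 * s))) / (δ / 4))
        (volume.restrict (Set.Ioi 0)) := by
      apply Integrable.div_const
      refine Integrable.add ?_ (Integrable.const_mul ?_ _)
      · simpa [neg_mul, IntegrableOn] using exp_neg_integrableOn_Ioi 0 ha
      · simpa [neg_mul, IntegrableOn] using exp_neg_integrableOn_Ioi 0 hπx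
    have hdiff : ∀ᵐ (s : ℝ) ∂(volume.restrict (Set.Ioi (0:ℝ))), ∀ t ∈ Metric.ball t₀ r,
        HasDerivAt (fun t : ℝ => h (gam t + (s:ℂ) * Complex.I))
          (deriv h (gam t + (s:ℂ) * Complex.I) * (-Complex.I * gam t)) t := by
      filter_upwards [self_mem_ae_restrict measurableSet_Ioi] with s hs
      intro t ht
      have hs0 : (0 : ℝ) < s := hs
      have hinner : HasDerivAt (fun t : ℝ => gam t + s * Complex.I) (-Complex.I * gam t) t :=
        (gam_hasDeriv t).add_const _
      have houter : HasDerivAt h (deriv h (gam t + s * Complex.I)) (gam t + s * Complex.I) := by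
        refine (hdiffat _ ?_).hasDerivAt
        have := him t ht s hs0.le
        linarith
      simpa [Function.comp_def] using houter.comp t hinner
    have main := hasDerivAt_integral_of_dominated_loc_of_deriv_le
      (F := fun (t : ℝ) (s : ℝ) => h (gam t + (s:ℂ) * Complex.I))
      (F' := fun (t : ℝ) (s : ℝ) => deriv h (gam t + (s:ℂ) * Complex.I) * (-Complex.I * gam t))
      (bound := fun s => (Real.exp (-(a * s)) + Kf (δ / 4) * Real.exp (-(Real.pi * x ^ 2 * s))) / (δ / 4))
      (Metric.ball_mem_nhds t₀ hr) hmeas hFint hF'meas hbnd hbint hdiff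
    have hval : (∫ s in Set.Ioi (0:ℝ), deriv h (gam t₀ + s * Complex.I) * (-Complex.I * gam t₀)) =
        gam t₀ * h (gam t₀) := by
      rw [MeasureTheory.integral_mul_const, innerFTC _ (by rw [gam_im]; exact hδ)]
      linear_combination (-(gam t₀ * h (gam t₀))) * Complex.I_sq
    rw [J_def]
    have := main.2
    rwa [hval] at this
  have seg : ∀ t₁ t₂ : ℝ, 0 < t₁ → t₁ ≤ t₂ → t₂ < Real.pi →
      (∫ t in t₁..t₂, h (gam t) * (-Complex.I * gam t)) = -Complex.I * (J t₂ - J t₁) := by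
    intro t₁ t₂ h1 h12 h2
    have hsub2 : Set.uIcc t₁ t₂ ⊆ Set.Ioo 0 Real.pi := by
      rw [Set.uIcc_of_le h12]
      intro t ht
      exact ⟨lt_of_lt_of_le h1 ht.1, lt_of_le_of_lt ht.2 h2⟩
    have hii : IntervalIntegrable (fun t => gam t * h (gam t)) volume t₁ t₂ := by
      apply ContinuousOn.intervalIntegrable
      apply ContinuousOn.mul gam_cont.continuousOn
      apply hcontOn.comp gam_cont.continuousOn
      intro t ht
      have := hsub2 ht
      simp only [Set.mem_setOf_eq]
      rw [gam_im]
      exact Real.sin_pos_of_pos_of_lt_pi this.1 this.2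
    have hFTC := intervalIntegral.integral_eq_sub_of_hasDerivAt
      (fun t ht => hJderiv t (hsub2 ht)) hii
    have hswap : (∫ t in t₁..t₂, h (gam t) * (-Complex.I * gam t)) =
        -Complex.I * ∫ t in t₁..t₂, gam t * h (gam t) := by
      rw [← intervalIntegral.integral_const_mul]
      apply intervalIntegral.integral_congr
      intro t ht
      ring
    rw [hswap, hFTC]
  -- integrability of the main integrand
  have hray_cont : ∀ w : ℂ, Continuous (fun s : ℝ => w + (s : ℂ) * Complex.I) := fun w =>
    continuous_const.add (Complex.continuous_ofReal.mul continuous_const)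
  have hfh : ∀ t : ℝ, ‖f t‖ = ‖h (1 + (t : ℂ) * Complex.I)‖ := by
    intro t
    rw [hnorm, f_def]; dsimp only
    rw [norm_mul]
    congr 1
    rw [show -(Real.pi : ℂ) * (x : ℂ) ^ 2 * t = ((-(Real.pi * x ^ 2 * t) : ℝ) : ℂ) by
      push_cast; ring]
    rw [Complex.norm_exp_ofReal]
    congr 1
    simp
  have hfmeas : ∀ (S : Set ℝ), S ⊆ Set.Ioi 0 → MeasurableSet S →
      AEStronglyMeasurable f (volume.restrict S) := by
    intro S hS hSm
    apply ContinuousOn.aestronglyMeasurable _ hSm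
    apply ContinuousOn.mul
    · apply hol.continuousOn.comp (hray_cont 1).continuousOn
      intro t ht
      have := hS ht
      simp only [Set.mem_setOf_eq, Complex.add_im, Complex.one_im, Complex.mul_im,
        Complex.ofReal_re, Complex.I_im, Complex.ofReal_im, Complex.I_re]
      simpa using this
    · exact ((continuous_const.mul Complex.continuous_ofReal).cexp).continuousOn
  have hg1 : ∀ t : ℝ, 0 < t → ‖g (1 + (t : ℂ) * Complex.I)‖ ≤
      Real.exp (Real.pi * m * t) + Kf t := by
    intro t ht
    have := gbound t ht (1 + (t : ℂ) * Complex.I) (by simp)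
    simpa using this
  have hfint : IntegrableOn f (Set.Ioi 0) := by
    have hsplit : Set.Ioi (0 : ℝ) = Set.Ioc 0 (1 / 2) ∪ Set.Ioi (1 / 2) :=
      (Set.Ioc_union_Ioi_eq_Ioi (by norm_num)).symm
    rw [hsplit]
    apply IntegrableOn.union
    · refine Integrable.mono' (integrable_const C)
        (hfmeas _ (by rw [hsplit]; exact Set.subset_union_left) measurableSet_Ioc) ?_
      filter_upwards [self_mem_ae_restrict measurableSet_Ioc] with t ht
      have ht0 : (0 : ℝ) < t := ht.1
      have him1 : (1 + (t : ℂ) * Complex.I).im = t := by simp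
      have hd1 : ‖(1 + (t : ℂ) * Complex.I) - 1‖ ≤ 1 / 2 := by
        rw [show (1 + (t : ℂ) * Complex.I) - 1 = (t : ℂ) * Complex.I by ring]
        rw [norm_mul, Complex.norm_I, mul_one, Complex.norm_real, Real.norm_eq_abs, abs_of_pos ht0]
        exact ht.2
      have hgd := hdecay (1 + (t : ℂ) * Complex.I) (by rw [him1]; exact ht0) (Or.inl hd1)
      rw [him1] at hgd
      rw [hfh, hnorm, him1]
      calc ‖g (1 + (t : ℂ) * Complex.I)‖ * Real.exp (-(Real.pi * x ^ 2 * t))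
          ≤ (C * Real.exp (-c' / t)) * 1 := by
            refine mul_le_mul ?_ ?_ (Real.exp_pos _).le
              (by positivity)
            · exact hgd
            · rw [Real.exp_le_one_iff]
              have : (0:ℝ) < Real.pi * x ^ 2 * t := by positivity
              linarith
        _ ≤ C := by
            rw [mul_one]
            nth_rewrite 2 [show C = C * 1 by ring]
            refine mul_le_mul_of_nonneg_left ?_ hC.le
            rw [Real.exp_le_one_iff]
            have h0 : (0:ℝ) < c' / t := by positivity
            rw [neg_div]
            linarith
    · refine Integrable.mono' (g := fun t => Real.exp (-(a * t)) +
        Kf (1 / 2) * Real.exp (-(Real.pi * x ^ 2 * t))) ?_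
        (hfmeas _ (by rw [hsplit]; exact Set.subset_union_right) measurableSet_Ioi) ?_
      · refine Integrable.add ?_ (Integrable.const_mul ?_ _)
        · simpa [neg_mul, IntegrableOn] using exp_neg_integrableOn_Ioi (1/2) ha
        · simpa [neg_mul, IntegrableOn] using exp_neg_integrableOn_Ioi (1/2) hπx
      · filter_upwards [self_mem_ae_restrict measurableSet_Ioi] with t ht
        have ht2 : (1/2 : ℝ) < t := ht
        have him1 : (1 + (t : ℂ) * Complex.I).im = t := by simp
        rw [hfh]
        have := hbound (1/2) (by norm_num) (1 + (t : ℂ) * Complex.I) (by rw [him1]; linarith)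
        rw [him1] at this
        exact this
  have hgam_near : ∀ t : ℝ, 0 < t → t < Real.pi → Real.sin t ≤ 1 / 4 →
      ‖gam t - 1‖ ≤ 1 / 2 ∨ ‖gam t + 1‖ ≤ 1 / 2 := by
    intro t ht0 htπ hs4
    have hsc := Real.sin_sq_add_cos_sq t
    have hsin0 : 0 < Real.sin t := Real.sin_pos_of_pos_of_lt_pi ht0 htπ
    rcases le_or_gt 0 (Real.cos t) with hc | hc
    · right
      have hcos : (7:ℝ)/8 ≤ Real.cos t := by nlinarith
      have hsq : (‖gam t + 1‖) ^ 2 ≤ (1/2) ^ 2 := by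
        rw [Complex.sq_norm, Complex.normSq_apply]
        simp only [Complex.add_re, Complex.add_im, Complex.one_re, Complex.one_im,
          gam_re, gam_im]
        nlinarith
      nlinarith [norm_nonneg (gam t + 1)]
    · left
      have hcos : Real.cos t ≤ -(7:ℝ)/8 := by nlinarith
      have hsq : (‖gam t - 1‖) ^ 2 ≤ (1/2) ^ 2 := by
        rw [Complex.sq_norm, Complex.normSq_apply]
        simp only [Complex.sub_re, Complex.sub_im, Complex.one_re, Complex.one_im,
          gam_re, gam_im]
        nlinarith
      nlinarith [norm_nonneg (gam t - 1)]
  have hhgam_bd : ∀ t ∈ Set.Ioo (0:ℝ) Real.pi, ‖h (gam t)‖ ≤ C + (1 + Kf (1/4)) := by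
    intro t ht
    have hsin0 : 0 < Real.sin t := Real.sin_pos_of_pos_of_lt_pi ht.1 ht.2
    rcases le_or_gt (Real.sin t) (1/4) with hs4 | hs4
    · have hcusp := hgam_near t ht.1 ht.2 hs4
      have hgd := hdecay (gam t) (by rw [gam_im]; exact hsin0) hcusp
      rw [gam_im] at hgd
      rw [hnorm, gam_im]
      have h1 : ‖g (gam t)‖ ≤ C := by
        refine hgd.trans ?_
        nth_rewrite 2 [show C = C * 1 by ring]
        refine mul_le_mul_of_nonneg_left ?_ hC.le
        rw [Real.exp_le_one_iff]
        have : (0:ℝ) < c' / Real.sin t := by positivity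
        rw [neg_div]
        linarith
      calc ‖g (gam t)‖ * Real.exp (-(Real.pi * x ^ 2 * Real.sin t)) ≤ C * 1 := by
            refine mul_le_mul h1 ?_ (Real.exp_pos _).le hC.le
            rw [Real.exp_le_one_iff]
            have : (0:ℝ) < Real.pi * x ^ 2 * Real.sin t := by positivity
            linarith
        _ ≤ C + (1 + Kf (1/4)) := by
            have := hK0 (1/4); linarith
    · have := hbound (1/4) (by norm_num) (gam t) (by rw [gam_im]; linarith)
      refine this.trans ?_
      have e5 : Real.exp (-(a * (gam t).im)) ≤ 1 := by
        rw [Real.exp_le_one_iff, gam_im]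
        nlinarith
      have e6 : Kf (1/4) * Real.exp (-(Real.pi * x ^ 2 * (gam t).im)) ≤ Kf (1/4) := by
        nth_rewrite 2 [show Kf (1/4) = Kf (1/4) * 1 by ring]
        refine mul_le_mul_of_nonneg_left ?_ (hK0 _)
        rw [Real.exp_le_one_iff, gam_im]
        nlinarith
      linarith
  have hphiint : IntegrableOn (fun t => h (gam t) * (-Complex.I * gam t)) (Set.Ioo 0 Real.pi) := by
    refine Integrable.mono' (integrable_const (C + (1 + Kf (1/4)))) ?_ ?_
    · apply ContinuousOn.aestronglyMeasurable _ measurableSet_Ioo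
      apply ContinuousOn.mul _ (Continuous.continuousOn (by
        exact continuous_const.mul gam_cont))
      apply hcontOn.comp gam_cont.continuousOn
      intro t ht
      simp only [Set.mem_setOf_eq]
      rw [gam_im]
      exact Real.sin_pos_of_pos_of_lt_pi ht.1 ht.2
    · filter_upwards [self_mem_ae_restrict measurableSet_Ioo] with t ht
      have h1 : ‖(-Complex.I * gam t)‖ = 1 := by
        rw [norm_mul, norm_neg, Complex.norm_I, one_mul, gam_abs]
      rw [norm_mul, h1, mul_one]
      exact hhgam_bd t ht
  -- limits of J along the sequence
  have key : ∀ (z₀ : ℂ) (w : ℕ → ℂ), z₀.im = 0 → (∀ n, 0 ≤ (w n).im) →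
      (∀ n, ‖w n - z₀‖ ≤ 1 / 4) → (z₀ = 1 ∨ z₀ = -1) →
      Tendsto w atTop (𝓝 z₀) →
      Tendsto (fun n => ∫ s in Set.Ioi (0 : ℝ), h (w n + s * Complex.I)) atTop
        (𝓝 (∫ s in Set.Ioi (0 : ℝ), h (z₀ + s * Complex.I))) := by
    intro z₀ w hz₀ him0 hnear hz01 hwlim
    have hwim : ∀ (n : ℕ) (s : ℝ), 0 < s → 0 < (w n + (s:ℂ) * Complex.I).im := by
      intro n s hs; rw [im_add_smul_I]; linarith [him0 n]
    apply MeasureTheory.tendsto_integral_of_dominated_convergence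
      (bound := fun s => C * Real.exp (-(Real.pi * x ^ 2 * s)) +
        (Real.exp (-(a * s)) + Kf (1/4) * Real.exp (-(Real.pi * x ^ 2 * s))))
    · intro n
      apply ContinuousOn.aestronglyMeasurable _ measurableSet_Ioi
      apply hcontOn.comp (hray_cont (w n)).continuousOn
      intro s hs
      exact hwim n s hs
    · refine Integrable.add (Integrable.const_mul ?_ _)
        (Integrable.add ?_ (Integrable.const_mul ?_ _))
      · simpa [neg_mul, IntegrableOn] using exp_neg_integrableOn_Ioi 0 hπx
      · simpa [neg_mul, IntegrableOn] using exp_neg_integrableOn_Ioi 0 ha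
      · simpa [neg_mul, IntegrableOn] using exp_neg_integrableOn_Ioi 0 hπx
    · intro n
      filter_upwards [self_mem_ae_restrict measurableSet_Ioi] with s hs
      have hs0 : (0:ℝ) < s := hs
      have hpim : (w n + (s:ℂ) * Complex.I).im = (w n).im + s := im_add_smul_I _ _
      have hbd2 : (0:ℝ) ≤ Real.exp (-(a * s)) + Kf (1/4) * Real.exp (-(Real.pi * x ^ 2 * s)) := by
        have := hK0 (1/4); positivity
      rcases le_or_gt s (1/4) with hs4 | hs4
      · have hd1 : ‖(w n + (s:ℂ) * Complex.I) - z₀‖ ≤ 1 / 2 := by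
          rw [show (w n + (s:ℂ) * Complex.I) - z₀ = (w n - z₀) + (s:ℂ) * Complex.I by ring]
          refine (norm_add_le _ _).trans ?_
          rw [norm_mul, Complex.norm_I, mul_one, Complex.norm_real, Real.norm_eq_abs, abs_of_pos hs0]
          have := hnear n
          linarith
        have hcusp : ‖(w n + (s:ℂ) * Complex.I) - 1‖ ≤ 1 / 2 ∨
            ‖(w n + (s:ℂ) * Complex.I) + 1‖ ≤ 1 / 2 := by
          rcases hz01 with h9 | h9
          · left; rw [← h9]; exact hd1
          · right; rw [show (w n + (s:ℂ) * Complex.I) + 1 =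
              (w n + (s:ℂ) * Complex.I) - (-1) by ring, ← h9]; exact hd1
        have hgd := hdecay _ (hwim n s hs0) hcusp
        rw [hnorm]
        have h7 : ‖g (w n + (s:ℂ) * Complex.I)‖ ≤ C := by
          refine hgd.trans ?_
          nth_rewrite 2 [show C = C * 1 by ring]
          refine mul_le_mul_of_nonneg_left ?_ hC.le
          rw [Real.exp_le_one_iff, neg_div]
          have : (0:ℝ) < c' / (w n + (s:ℂ) * Complex.I).im := div_pos hc' (hwim n s hs0)
          linarith
        have h8 : Real.exp (-(Real.pi * x ^ 2 * (w n + (s:ℂ) * Complex.I).im)) ≤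
            Real.exp (-(Real.pi * x ^ 2 * s)) := by
          rw [Real.exp_le_exp, hpim]
          nlinarith [him0 n]
        have h10 : ‖g (w n + (s:ℂ) * Complex.I)‖ *
            Real.exp (-(Real.pi * x ^ 2 * (w n + (s:ℂ) * Complex.I).im)) ≤
            C * Real.exp (-(Real.pi * x ^ 2 * s)) :=
          mul_le_mul h7 h8 (Real.exp_pos _).le hC.le
        linarith
      · have hb := hbound (1/4) (by norm_num) (w n + (s:ℂ) * Complex.I)
          (by rw [hpim]; linarith [him0 n])
        refine hb.trans ?_
        have h11 : Real.exp (-(a * (w n + (s:ℂ) * Complex.I).im)) +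
            Kf (1/4) * Real.exp (-(Real.pi * x ^ 2 * (w n + (s:ℂ) * Complex.I).im)) ≤
            Real.exp (-(a * s)) + Kf (1/4) * Real.exp (-(Real.pi * x ^ 2 * s)) := by
          gcongr <;> first
            | exact hK0 _
            | (rw [hpim]; nlinarith [him0 n])
        have h12 : (0:ℝ) ≤ C * Real.exp (-(Real.pi * x ^ 2 * s)) := by positivity
        linarith
    · filter_upwards [self_mem_ae_restrict measurableSet_Ioi] with s hs
      have hs0 : (0:ℝ) < s := hs
      have hc9 : ContinuousAt h (z₀ + (s:ℂ) * Complex.I) := by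
        apply hcontOn.continuousAt (hopen.mem_nhds _)
        simp only [Set.mem_setOf_eq, im_add_smul_I, hz₀]
        linarith
      have h13 : Tendsto (fun n => w n + (s:ℂ) * Complex.I) atTop
          (𝓝 (z₀ + (s:ℂ) * Complex.I)) := hwlim.add tendsto_const_nhds
      exact (hc9.tendsto.comp h13)
  -- the sequence
  set ε : ℕ → ℝ := fun n => Real.pi / (n + 64) with ε_def
  have hεpos : ∀ n, 0 < ε n := fun n => div_pos Real.pi_pos (by positivity)
  have hεsmall : ∀ n, ε n ≤ Real.pi / 64 := by
    intro n
    apply div_le_div_of_nonneg_left Real.pi_pos.le (by norm_num) (by push_cast; linarith)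
  have hεto0 : Tendsto ε atTop (𝓝 0) := by
    have h1 : Tendsto (fun n : ℕ => (n : ℝ) + 64) atTop atTop :=
      tendsto_atTop_add_const_right _ _ tendsto_natCast_atTop_atTop
    exact Tendsto.div_atTop tendsto_const_nhds h1
  have hgam1 : ∀ n, gam (Real.pi - ε n) = Complex.exp ((ε n : ℂ) * Complex.I) := by
    intro n
    rw [gam_eq]
    congr 2
    push_cast
    ring
  have hgam2 : ∀ n, gam (ε n) = -Complex.exp (-(ε n : ℂ) * Complex.I) := by
    intro n
    rw [gam_eq]
    rw [show ((Real.pi - ε n : ℝ) : ℂ) * Complex.I =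
      Real.pi * Complex.I + -(ε n : ℂ) * Complex.I by push_cast; ring]
    rw [Complex.exp_add, Complex.exp_pi_mul_I]
    ring
  have hεlim : Tendsto (fun n => ((ε n : ℝ) : ℂ)) atTop (𝓝 0) := by
    have := (Complex.continuous_ofReal.tendsto 0).comp hεto0
    simpa [Function.comp_def] using this
  have ht1 : Tendsto (fun n => gam (Real.pi - ε n)) atTop (𝓝 1) := by
    have h2 : Tendsto (fun n => ((ε n : ℝ) : ℂ) * Complex.I) atTop (𝓝 0) := by
      simpa using hεlim.mul_const Complex.I
    have h3 := (Complex.continuous_exp.tendsto 0).comp h2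
    rw [Complex.exp_zero] at h3
    refine h3.congr fun n => ?_
    simp only [Function.comp_apply]
    rw [hgam1 n]
  have ht2 : Tendsto (fun n => gam (ε n)) atTop (𝓝 (-1)) := by
    have h2 : Tendsto (fun n => -((ε n : ℝ) : ℂ) * Complex.I) atTop (𝓝 0) := by
      simpa using (hεlim.neg).mul_const Complex.I
    have h3 := (Complex.continuous_exp.tendsto 0).comp h2
    rw [Complex.exp_zero] at h3
    have h4 := h3.neg
    refine h4.congr fun n => ?_
    simp only [Function.comp_apply]
    rw [hgam2 n]
  have hπ64 : Real.pi / 64 ≤ 1 / 8 := by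
    have := Real.pi_le_four
    linarith
  have habs1 : ∀ n, ‖gam (Real.pi - ε n) - 1‖ ≤ 1 / 4 := by
    intro n
    rw [hgam1 n]
    have h5 : ‖(ε n : ℂ) * Complex.I‖ ≤ 1 := by
      rw [norm_mul, Complex.norm_I, mul_one, Complex.norm_real, Real.norm_eq_abs, abs_of_pos (hεpos n)]
      have := hεsmall n
      linarith [hπ64]
    have := Complex.norm_exp_sub_one_le h5
    rw [norm_mul, Complex.norm_I, mul_one, Complex.norm_real, Real.norm_eq_abs, abs_of_pos (hεpos n)] at this
    have h6 := hεsmall n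
    linarith [hπ64]
  have habs2 : ∀ n, ‖gam (ε n) - (-1)‖ ≤ 1 / 4 := by
    intro n
    rw [hgam2 n]
    rw [show -Complex.exp (-(ε n : ℂ) * Complex.I) - (-1) =
      -(Complex.exp (-(ε n : ℂ) * Complex.I) - 1) by ring, norm_neg]
    have h5 : ‖-(ε n : ℂ) * Complex.I‖ ≤ 1 := by
      rw [norm_mul, Complex.norm_I, mul_one, norm_neg, Complex.norm_real, Real.norm_eq_abs,
        abs_of_pos (hεpos n)]
      have := hεsmall n
      linarith [hπ64]
    have := Complex.norm_exp_sub_one_le h5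
    rw [norm_mul, Complex.norm_I, mul_one, norm_neg, Complex.norm_real, Real.norm_eq_abs,
      abs_of_pos (hεpos n)] at this
    have h6 := hεsmall n
    linarith [hπ64]
  have him1 : ∀ n, 0 ≤ (gam (Real.pi - ε n)).im := by
    intro n
    rw [gam_im]
    apply Real.sin_nonneg_of_nonneg_of_le_pi
    · have := hεsmall n; have := Real.pi_gt_three; linarith [hπ64]
    · have := hεpos n; linarith
  have him2 : ∀ n, 0 ≤ (gam (ε n)).im := by
    intro n
    rw [gam_im]
    apply Real.sin_nonneg_of_nonneg_of_le_pi
    · exact (hεpos n).le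
    · have := hεsmall n; have := Real.pi_gt_three; linarith [hπ64]
  have hP := key 1 (fun n => gam (Real.pi - ε n)) (by simp) him1 habs1 (Or.inl rfl) ht1
  have hQ := key (-1) (fun n => gam (ε n)) (by simp) him2 habs2 (Or.inr rfl) ht2
  have hmain : (∫ t in Set.Ioo (0 : ℝ) Real.pi, h (gam t) * (-Complex.I * gam t)) =
      -Complex.I * ((∫ s in Set.Ioi (0 : ℝ), h (1 + s * Complex.I)) -
        ∫ s in Set.Ioi (0 : ℝ), h (-1 + s * Complex.I)) := by
    have hmono : Monotone (fun n : ℕ => Set.Ioo (ε n) (Real.pi - ε n)) := by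
      intro n k hnk
      have hεle : ε k ≤ ε n := by
        apply div_le_div_of_nonneg_left Real.pi_pos.le (by positivity)
        push_cast
        exact add_le_add_left (Nat.cast_le.2 hnk) 64
      exact Set.Ioo_subset_Ioo hεle (by linarith)
    have hunion : (⋃ n, Set.Ioo (ε n) (Real.pi - ε n)) = Set.Ioo 0 Real.pi := by
      apply Set.Subset.antisymm
      · intro t ht
        rcases Set.mem_iUnion.1 ht with ⟨n, hn⟩
        exact ⟨lt_trans (hεpos n) hn.1, lt_of_lt_of_le hn.2 (by linarith [hεpos n])⟩
      · intro t ht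
        have hmin : (0:ℝ) < min t (Real.pi - t) := lt_min ht.1 (by linarith [ht.2])
        obtain ⟨n, hn⟩ := (hεto0.eventually (Iio_mem_nhds hmin)).exists
        refine Set.mem_iUnion.2 ⟨n, ?_, ?_⟩
        · exact lt_of_lt_of_le hn (min_le_left _ _)
        · have := lt_of_lt_of_le hn (min_le_right t (Real.pi - t))
          linarith
    have hSn := MeasureTheory.tendsto_setIntegral_of_monotone
      (fun n => measurableSet_Ioo) hmono (by rw [hunion]; exact hphiint)
    rw [hunion] at hSn
    have hSn_eq : ∀ n, (∫ t in Set.Ioo (ε n) (Real.pi - ε n),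
        h (gam t) * (-Complex.I * gam t)) = -Complex.I * (J (Real.pi - ε n) - J (ε n)) := by
      intro n
      have hle : ε n ≤ Real.pi - ε n := by
        have := hεsmall n; have := Real.pi_gt_three; linarith [hπ64]
      rw [← seg (ε n) (Real.pi - ε n) (hεpos n) hle (by linarith [hεpos n])]
      rw [intervalIntegral.integral_of_le hle, MeasureTheory.integral_Ioc_eq_integral_Ioo]
    have hlim2 : Tendsto (fun n => -Complex.I * (J (Real.pi - ε n) - J (ε n))) atTop
        (𝓝 (-Complex.I * ((∫ s in Set.Ioi (0 : ℝ), h (1 + s * Complex.I)) -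
          ∫ s in Set.Ioi (0 : ℝ), h (-1 + s * Complex.I)))) := by
      exact ((hP.sub hQ).const_mul _)
    exact tendsto_nhds_unique (hSn.congr hSn_eq) hlim2
  refine ⟨hfint, ?_⟩
  have hsemi : semicircleIntegral h =
      ∫ t in Set.Ioo (0:ℝ) Real.pi, h (gam t) * (-Complex.I * gam t) := by
    have h0 : semicircleIntegral h =
        ∫ t in (0:ℝ)..Real.pi, h (gam t) * (-Complex.I * gam t) := rfl
    rw [h0, intervalIntegral.integral_of_le Real.pi_pos.le,
      MeasureTheory.integral_Ioc_eq_integral_Ioo]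
  have e3 : ∀ s : ℝ, (Real.pi:ℂ) * Complex.I * (x:ℂ)^2 * (1 + (s:ℂ)*Complex.I) =
      Real.pi * Complex.I * (x:ℂ)^2 + (-(Real.pi:ℂ) * (x:ℂ)^2 * s) := by
    intro s
    linear_combination ((Real.pi:ℂ) * (x:ℂ)^2 * (s:ℂ)) * Complex.I_sq
  have e4 : ∀ s : ℝ, (Real.pi:ℂ) * Complex.I * (x:ℂ)^2 * (-1 + (s:ℂ)*Complex.I) =
      -(Real.pi * Complex.I * (x:ℂ)^2) + (-(Real.pi:ℂ) * (x:ℂ)^2 * s) := by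
    intro s
    linear_combination ((Real.pi:ℂ) * (x:ℂ)^2 * (s:ℂ)) * Complex.I_sq
  have hid1 : ∀ s : ℝ, h (1 + (s:ℂ)*Complex.I) =
      Complex.exp (Real.pi * Complex.I * (x:ℂ)^2) * f s := by
    intro s
    rw [h_def, f_def]; dsimp only
    rw [e3 s, Complex.exp_add]
    ring
  have hid2 : ∀ s : ℝ, 0 < s → h (-1 + (s:ℂ)*Complex.I) =
      Complex.exp (-(Real.pi * Complex.I * (x:ℂ)^2)) * f s := by
    intro s hs
    have hper' : g (-1 + (s:ℂ)*Complex.I) = g (1 + (s:ℂ)*Complex.I) := by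
      have h7 := hper (-1 + (s:ℂ)*Complex.I) (by simp [hs])
      rw [show (-1 + (s:ℂ)*Complex.I) + 2 = 1 + (s:ℂ)*Complex.I by ring] at h7
      exact h7.symm
    rw [h_def, f_def]; dsimp only
    rw [hper', e4 s, Complex.exp_add]
    ring
  have hint1 : IntegrableOn (fun s : ℝ => h (1 + (s:ℂ)*Complex.I)) (Set.Ioi 0) := by
    rw [show (fun s : ℝ => h (1 + (s:ℂ)*Complex.I)) =
      fun s => Complex.exp (Real.pi * Complex.I * (x:ℂ)^2) * f s from funext hid1]
    exact hfint.const_mul _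
  have hint2 : IntegrableOn (fun s : ℝ => h (-1 + (s:ℂ)*Complex.I)) (Set.Ioi 0) := by
    refine Integrable.congr
      (hfint.const_mul (Complex.exp (-(Real.pi * Complex.I * (x:ℂ)^2)))) ?_
    filter_upwards [self_mem_ae_restrict measurableSet_Ioi] with s hs
    exact (hid2 s hs).symm
  have hPQ : (∫ s in Set.Ioi (0:ℝ), h (1 + s*Complex.I)) -
      (∫ s in Set.Ioi (0:ℝ), h (-1 + s*Complex.I)) =
      (Complex.exp (Real.pi * Complex.I * (x:ℂ)^2) -
        Complex.exp (-(Real.pi * Complex.I * (x:ℂ)^2))) * ∫ s in Set.Ioi (0:ℝ), f s := by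
    rw [← MeasureTheory.integral_sub hint1 hint2]
    calc (∫ s in Set.Ioi (0:ℝ), (h (1 + s*Complex.I) - h (-1 + s*Complex.I)))
        = ∫ s in Set.Ioi (0:ℝ), (Complex.exp (Real.pi * Complex.I * (x:ℂ)^2) -
            Complex.exp (-(Real.pi * Complex.I * (x:ℂ)^2))) * f s := by
          apply MeasureTheory.setIntegral_congr_fun measurableSet_Ioi
          intro s hs
          dsimp only
          rw [hid1 s, hid2 s hs]
          ring
      _ = _ := MeasureTheory.integral_const_mul _ _
  have hsin : Complex.exp (Real.pi * Complex.I * (x:ℂ)^2) -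
      Complex.exp (-(Real.pi * Complex.I * (x:ℂ)^2)) =
      2 * Complex.I * ((Real.sin (Real.pi * x^2) : ℝ) : ℂ) := by
    rw [show (Real.pi:ℂ) * Complex.I * (x:ℂ)^2 = ((Real.pi * x^2 : ℝ):ℂ) * Complex.I by
      push_cast; ring]
    rw [Complex.ofReal_sin, Complex.sin]
    rw [show -((Real.pi * x^2 : ℝ):ℂ) * Complex.I = -(((Real.pi * x^2 : ℝ):ℂ) * Complex.I) by
      ring]
    linear_combination (Complex.exp (((Real.pi * x^2 : ℝ):ℂ) * Complex.I) -
      Complex.exp (-(((Real.pi * x^2 : ℝ):ℂ) * Complex.I))) * Complex.I_sq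
  rw [hsemi, hmain, hPQ, hsin]
  linear_combination (-(((Real.sin (Real.pi * x^2) : ℝ):ℂ) *
    ∫ s in Set.Ioi (0:ℝ), f s)) * Complex.I_sq
end
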